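/- arXiv:0911.0534 — 5 statements merged into one kernel-verified Lean document; each statement's English description precedes it below -/
import Mathlib

section
/- Fix a real γ with 0 ≤ γ < 1, a real σ and n ≥ 1 with σ-(n-1) > 0. If q is analytic on the unit disk with q(0)=1 and Re q(z) > γ for all z in the disk, then the function Q(z) = ((σ-(n-1))/z^{σ-(n-1)}) ∫_0^z t^{σ-n} q(t) dt (extended by Q(0)=1) also satisfies Re Q(z) > γ on the unit disk. -/
open Complex MeasureTheory

/-- The Carathéodory class `P`: analytic on the unit disk, value `1` at `0`,
positive real part. -/
def IsCara (p : ℂ → ℂ) : Prop :=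
  DifferentiableOn ℂ p (Metric.ball 0 1) ∧ p 0 = 1 ∧
    ∀ z ∈ Metric.ball (0 : ℂ) 1, 0 < (p z).re

/-- The σ-nth integral iterate (averaged form after substituting `t = s z`):
`p_{σ,n}(z) = (σ-(n-1)) ∫_0^1 s^(σ-n) p_{σ,n-1}(s z) ds`. -/
noncomputable def sigmaIter (σ : ℝ) : ℕ → (ℂ → ℂ) → (ℂ → ℂ)
  | 0, p => p
  | (n + 1), p => fun z =>
      ((σ - (n : ℝ)) : ℂ) *
        ∫ s in (0 : ℝ)..1, ((s ^ (σ - ((n : ℝ) + 1)) : ℝ) : ℂ) * sigmaIter σ n p ((s : ℂ) * z)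

/-- The coefficient multiplier `[σ]_{n/k} = (σ-(n-1))_n / (σ+k-(n-1))_n`
(Pochhammer / rising factorial). -/
noncomputable def poch (σ : ℝ) (n k : ℕ) : ℝ :=
  (ascPochhammer ℝ n).eval (σ - ((n : ℝ) - 1)) /
    (ascPochhammer ℝ n).eval (σ + (k : ℝ) - ((n : ℝ) - 1))

/-- Membership in `P_n^σ`. -/
def MemPn (σ : ℝ) (n : ℕ) (q : ℂ → ℂ) : Prop :=
  ∃ p : ℂ → ℂ, IsCara p ∧ ∀ z ∈ Metric.ball (0 : ℂ) 1, q z = sigmaIter σ n p z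

/-- Membership in `B_n^σ(β)`: `f(z) = z (β + (1-β) p_{σ,n}(z))` for some Carathéodory `p`. -/
def MemB (σ : ℝ) (n : ℕ) (β : ℝ) (f : ℂ → ℂ) : Prop :=
  ∃ p : ℂ → ℂ, IsCara p ∧ ∀ z ∈ Metric.ball (0 : ℂ) 1,
    f z = z * ((β : ℂ) + ((1 : ℂ) - β) * sigmaIter σ n p z)

/-- The integral iteration step preserves `Re > γ` for `0 ≤ γ < 1`. -/
theorem stmt3 (γ σ : ℝ) (n : ℕ) (hn : 1 ≤ n) (hγ0 : 0 ≤ γ) (hγ1 : γ < 1)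
    (hσ : 0 < σ - ((n : ℝ) - 1))
    (q : ℂ → ℂ) (hq : DifferentiableOn ℂ q (Metric.ball 0 1)) (hq0 : q 0 = 1)
    (hre : ∀ z ∈ Metric.ball (0 : ℂ) 1, γ < (q z).re) :
    ∀ z ∈ Metric.ball (0 : ℂ) 1,
      γ < (((σ - ((n : ℝ) - 1)) : ℂ) *
        ∫ s in (0 : ℝ)..1, ((s ^ (σ - (n : ℝ)) : ℝ) : ℂ) * q ((s : ℂ) * z)).re := by
  intro z hz
  have hα : (-1 : ℝ) < σ - n := by linarith
  have hz1 : ‖z‖ < 1 := by simpa [Metric.mem_ball, dist_eq_norm] using hz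
  have hmaps : ∀ s ∈ Set.uIcc (0:ℝ) 1, ((s:ℂ) * z) ∈ Metric.ball (0:ℂ) 1 := by
    intro s hs
    rw [Set.uIcc_of_le zero_le_one] at hs
    rw [Metric.mem_ball, dist_zero_right, norm_mul, Complex.norm_real]
    calc |s| * ‖z‖ ≤ 1 * ‖z‖ := by
          apply mul_le_mul_of_nonneg_right _ (norm_nonneg z)
          rw [_root_.abs_of_nonneg hs.1]; exact hs.2
      _ < 1 := by simpa using hz1
  have hcont : ContinuousOn (fun s : ℝ => q ((s:ℂ) * z)) (Set.uIcc (0:ℝ) 1) :=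
    hq.continuousOn.comp ((Complex.continuous_ofReal.mul continuous_const).continuousOn) hmaps
  have hIrpow : IntervalIntegrable (fun s : ℝ => s ^ (σ - (n:ℝ))) volume 0 1 :=
    intervalIntegral.intervalIntegrable_rpow' hα
  have hIr : IntervalIntegrable (fun s : ℝ => s ^ (σ - (n:ℝ)) * (q ((s:ℂ)*z)).re)
      volume 0 1 :=
    hIrpow.mul_continuousOn (Complex.continuous_re.comp_continuousOn hcont)
  have hIγ : IntervalIntegrable (fun s : ℝ => s ^ (σ - (n:ℝ)) * γ) volume 0 1 :=
    hIrpow.mul_const γ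
  have hrpowC : IntervalIntegrable (fun s : ℝ => ((s ^ (σ-(n:ℝ)) : ℝ) : ℂ)) volume 0 1 :=
    ⟨hIrpow.1.ofReal, hIrpow.2.ofReal⟩
  have hIc : IntervalIntegrable (fun s : ℝ => ((s ^ (σ-(n:ℝ)):ℝ):ℂ) * q ((s:ℂ)*z))
      volume 0 1 := hrpowC.mul_continuousOn hcont
  have hre_int : (∫ s in (0:ℝ)..1, ((s ^ (σ-(n:ℝ)):ℝ):ℂ) * q ((s:ℂ)*z)).re
      = ∫ s in (0:ℝ)..1, s ^ (σ-(n:ℝ)) * (q ((s:ℂ)*z)).re := by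
    have := Complex.reCLM.intervalIntegral_comp_comm hIc
    simp only [Complex.reCLM_apply] at this
    rw [← this]
    congr 1
    ext s
    rw [Complex.re_ofReal_mul]
  have hc0 : (0:ℝ) < σ - n + 1 := by linarith
  have hbase : ∫ s in (0:ℝ)..1, s ^ (σ - (n:ℝ)) = 1 / (σ - n + 1) := by
    rw [integral_rpow (Or.inl hα), Real.one_rpow, Real.zero_rpow hc0.ne']
    ring
  have hpos : 0 < ∫ s in (0:ℝ)..1,
      (s ^ (σ - (n:ℝ)) * (q ((s:ℂ)*z)).re - s ^ (σ - (n:ℝ)) * γ) := by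
    apply intervalIntegral.intervalIntegral_pos_of_pos_on (hIr.sub hIγ) _ one_pos
    intro s hs
    have hsz : ((s:ℂ) * z) ∈ Metric.ball (0:ℂ) 1 := by
      apply hmaps
      rw [Set.uIcc_of_le zero_le_one]
      exact ⟨hs.1.le, hs.2.le⟩
    have h1 : 0 < s ^ (σ - (n:ℝ)) := Real.rpow_pos_of_pos hs.1 _
    have h2 := hre _ hsz
    nlinarith
  have hsplit : ∫ s in (0:ℝ)..1, s ^ (σ - (n:ℝ)) * (q ((s:ℂ)*z)).re
      = (∫ s in (0:ℝ)..1,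
          (s ^ (σ - (n:ℝ)) * (q ((s:ℂ)*z)).re - s ^ (σ - (n:ℝ)) * γ))
        + γ * (1 / (σ - n + 1)) := by
    rw [intervalIntegral.integral_sub hIr hIγ, intervalIntegral.integral_mul_const, hbase]
    ring
  have hcast : ((σ : ℂ) - (((n:ℝ) : ℂ) - 1)) = (((σ - (n:ℝ) + 1 : ℝ)) : ℂ) := by
    push_cast; ring
  rw [hcast, Complex.re_ofReal_mul, hre_int, hsplit]
  have := mul_pos hc0 hpos
  field_simp
  simp only [← mul_sub] at this
  nlinarith
end

section
/- For fixed real σ and n ≥ 1 with σ-(n-1) > 0, the family P_n^σ of σ-nth integral iterates of Carathéodory functions is contained in the Carathéodory class P; i.e., every p_{σ,n} satisfies Re p_{σ,n}(z) > 0 on the unit disk. -/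
open Complex MeasureTheory

lemma myOfRealII {f : ℝ → ℝ} {a b : ℝ} (h : IntervalIntegrable f volume a b) :
    IntervalIntegrable (fun s => ((f s : ℝ) : ℂ)) volume a b :=
  ⟨h.1.ofReal, h.2.ofReal⟩

lemma aux_step (a : ℝ) (ha : -1 < a) (q : ℂ → ℂ)
    (hqc : ContinuousOn q (Metric.ball 0 1))
    (hqp : ∀ z ∈ Metric.ball (0:ℂ) 1, 0 < (q z).re) :
    ContinuousOn (fun z => ∫ s in (0:ℝ)..1, ((s ^ a : ℝ) : ℂ) * q ((s:ℂ) * z))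
      (Metric.ball 0 1) ∧
    ∀ z ∈ Metric.ball (0:ℂ) 1,
      0 < (∫ s in (0:ℝ)..1, ((s ^ a : ℝ) : ℂ) * q ((s:ℂ) * z)).re := by
  have hball : ∀ z ∈ Metric.ball (0:ℂ) 1, ∀ s ∈ Set.Icc (0:ℝ) 1,
      (s:ℂ) * z ∈ Metric.ball (0:ℂ) 1 := by
    intro z hz s hs
    simp only [Metric.mem_ball, dist_zero_right] at hz ⊢
    calc ‖(s:ℂ) * z‖ = |s| * ‖z‖ := by
          rw [norm_mul, Complex.norm_real, Real.norm_eq_abs]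
      _ ≤ 1 * ‖z‖ := by
          apply mul_le_mul_of_nonneg_right _ (norm_nonneg z)
          rw [_root_.abs_of_nonneg hs.1]; exact hs.2
      _ < 1 := by rwa [one_mul]
  have hcomp : ∀ z ∈ Metric.ball (0:ℂ) 1,
      ContinuousOn (fun s : ℝ => q ((s:ℂ) * z)) (Set.Icc 0 1) := by
    intro z hz
    apply hqc.comp ((Complex.continuous_ofReal.mul continuous_const).continuousOn)
    intro s hs; exact hball z hz s hs
  have hIc : ∀ z ∈ Metric.ball (0:ℂ) 1,
      IntervalIntegrable (fun s => ((s ^ a : ℝ) : ℂ) * q ((s:ℂ) * z)) volume 0 1 := by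
    intro z hz
    apply (myOfRealII (intervalIntegral.intervalIntegrable_rpow' ha)).mul_continuousOn
    rw [Set.uIcc_of_le (zero_le_one)]
    exact hcomp z hz
  constructor
  · -- continuity
    intro z0 hz0
    apply ContinuousAt.continuousWithinAt
    simp only [Metric.mem_ball, dist_zero_right] at hz0
    set r : ℝ := (1 + ‖z0‖) / 2 with hr
    have hr1 : r < 1 := by rw [hr]; linarith
    have hz0r : ‖z0‖ < r := by rw [hr]; linarith
    have hr0 : (0:ℝ) ≤ r := by positivity
    obtain ⟨M, hM⟩ := (isCompact_closedBall (0:ℂ) r).exists_bound_of_continuousOn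
      (hqc.mono (fun x hx => by
        simp only [Metric.mem_closedBall, dist_zero_right] at hx
        simpa [Metric.mem_ball, dist_zero_right] using lt_of_le_of_lt hx hr1))
    have hev : ∀ᶠ z in nhds z0, z ∈ Metric.ball (0:ℂ) r :=
      Metric.isOpen_ball.eventually_mem (by simpa [Metric.mem_ball, dist_zero_right] using hz0r)
    apply intervalIntegral.continuousAt_of_dominated_interval
      (bound := fun s => s ^ a * M)
    · filter_upwards [hev] with z hz
      have hz1 : z ∈ Metric.ball (0:ℂ) 1 := by
        simp only [Metric.mem_ball, dist_zero_right] at hz ⊢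
        exact lt_trans hz hr1
      have := (hIc z hz1).1.aestronglyMeasurable
      rwa [Set.uIoc_of_le (zero_le_one)]
    · filter_upwards [hev] with z hz
      refine Filter.Eventually.of_forall (fun s hs => ?_)
      rw [Set.uIoc_of_le (zero_le_one)] at hs
      have hs0 : 0 < s := hs.1
      have hsz : (s:ℂ) * z ∈ Metric.closedBall (0:ℂ) r := by
        simp only [Metric.mem_ball, dist_zero_right] at hz
        simp only [Metric.mem_closedBall, dist_zero_right]
        calc ‖(s:ℂ) * z‖ = |s| * ‖z‖ := by
              rw [norm_mul, Complex.norm_real, Real.norm_eq_abs]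
          _ ≤ 1 * r := by
              apply mul_le_mul (by rw [abs_of_pos hs0]; exact hs.2) (le_of_lt hz)
                (norm_nonneg z) zero_le_one
          _ = r := one_mul r
      calc ‖((s ^ a : ℝ) : ℂ) * q ((s:ℂ) * z)‖ = |s ^ a| * ‖q ((s:ℂ) * z)‖ := by
            rw [norm_mul, Complex.norm_real, Real.norm_eq_abs]
        _ ≤ s ^ a * M := by
            rw [abs_of_pos (Real.rpow_pos_of_pos hs0 a)]
            exact mul_le_mul_of_nonneg_left (hM _ hsz) (le_of_lt (Real.rpow_pos_of_pos hs0 a))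
    · exact (intervalIntegral.intervalIntegrable_rpow' ha).mul_const M
    · refine Filter.Eventually.of_forall (fun s hs => ?_)
      rw [Set.uIoc_of_le (zero_le_one)] at hs
      have hmem : (s:ℂ) * z0 ∈ Metric.ball (0:ℂ) 1 :=
        hball z0 (by simpa [Metric.mem_ball, dist_zero_right] using hz0) s
          ⟨le_of_lt hs.1, hs.2⟩
      have h2 : ContinuousAt (fun z : ℂ => q ((s:ℂ) * z)) z0 :=
        (hqc.continuousAt (Metric.isOpen_ball.mem_nhds hmem)).comp
          ((continuous_const.mul continuous_id).continuousAt)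
      exact continuousAt_const.mul h2
  · -- positivity
    intro z hz
    rw [show (∫ s in (0:ℝ)..1, ((s ^ a : ℝ) : ℂ) * q ((s:ℂ) * z)).re
        = ∫ s in (0:ℝ)..1, (((s ^ a : ℝ) : ℂ) * q ((s:ℂ) * z)).re from
      (Complex.reCLM.intervalIntegral_comp_comm (hIc z hz)).symm]
    have : ∀ s : ℝ, (((s ^ a : ℝ) : ℂ) * q ((s:ℂ) * z)).re = s ^ a * (q ((s:ℂ) * z)).re := by
      intro s; exact Complex.re_ofReal_mul _ _
    simp_rw [this]
    apply intervalIntegral.intervalIntegral_pos_of_pos_on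
    · apply (intervalIntegral.intervalIntegrable_rpow' ha).mul_continuousOn
      rw [Set.uIcc_of_le (zero_le_one)]
      exact Complex.continuous_re.comp_continuousOn (hcomp z hz)
    · intro s hs
      have h1 : 0 < s ^ a := Real.rpow_pos_of_pos hs.1 a
      have h2 : 0 < (q ((s:ℂ) * z)).re :=
        hqp _ (hball z hz s ⟨le_of_lt hs.1, le_of_lt hs.2⟩)
      positivity
    · exact zero_lt_one

lemma main_claim (σ : ℝ) (p : ℂ → ℂ) (hp : IsCara p) :
    ∀ m : ℕ, 0 < σ - ((m:ℝ) - 1) →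
      ContinuousOn (sigmaIter σ m p) (Metric.ball 0 1) ∧
      ∀ z ∈ Metric.ball (0:ℂ) 1, 0 < (sigmaIter σ m p z).re := by
  intro m
  induction m with
  | zero => intro _; exact ⟨hp.1.continuousOn, hp.2.2⟩
  | succ m ih =>
    intro h
    have hm : 0 < σ - (m:ℝ) := by push_cast at h; linarith
    obtain ⟨hc, hpos⟩ := ih (by linarith)
    have ha : -1 < σ - ((m:ℝ) + 1) := by linarith
    obtain ⟨hc', hpos'⟩ := aux_step _ ha _ hc hpos
    refine ⟨?_, ?_⟩
    · simp only [sigmaIter]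
      exact continuousOn_const.mul hc'
    · intro z hz
      simp only [sigmaIter]
      have he : ((σ:ℂ) - (((m:ℝ)):ℂ)) = (((σ - (m:ℝ)):ℝ):ℂ) := by push_cast; ring
      rw [he, Complex.re_ofReal_mul]
      exact mul_pos hm (hpos' z hz)

/-- `P_n^σ ⊂ P`: the σ-nth integral iterate of a Carathéodory function has
positive real part on the unit disk. -/
theorem stmt5 (σ : ℝ) (n : ℕ) (hn : 1 ≤ n) (hσ : 0 < σ - ((n : ℝ) - 1))
    (p : ℂ → ℂ) (hp : IsCara p) :
    ∀ z ∈ Metric.ball (0 : ℂ) 1, 0 < (sigmaIter σ n p z).re := by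
  exact (main_claim σ p hp n hσ).2
end

section
/- If p_{σ,n} ∈ P_n^σ, then for |z| = r < 1: |p_{σ,n}(z)| ≤ 1 + 2 Σ_{k=1}^∞ [(σ-(n-1))_n/(σ+k-(n-1))_n] r^k. -/
open Complex MeasureTheory

open Polynomial

lemma asc_succ_left_eval (n : ℕ) (x : ℝ) :
    (ascPochhammer ℝ (n+1)).eval x = x * (ascPochhammer ℝ n).eval (x+1) := by
  rw [ascPochhammer_succ_left]
  simp [eval_comp]

lemma asc_mono (n : ℕ) {x y : ℝ} (hx : 0 < x) (hxy : x ≤ y) :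
    (ascPochhammer ℝ n).eval x ≤ (ascPochhammer ℝ n).eval y := by
  induction n with
  | zero => simp
  | succ n ih =>
    rw [show (n+1) = n+1 from rfl, ascPochhammer_succ_right]
    simp only [eval_mul, eval_add, eval_X, eval_natCast]
    have h1 := ascPochhammer_pos n x hx
    have := ih
    apply mul_le_mul this (by linarith) (by positivity) (le_of_lt (ascPochhammer_pos n y (lt_of_lt_of_le hx hxy)))

lemma poch_denom_pos (σ : ℝ) (n k : ℕ) (h : 0 < σ - ((n:ℝ) - 1)) :
    0 < (ascPochhammer ℝ n).eval (σ + (k:ℝ) - ((n:ℝ) - 1)) :=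
  ascPochhammer_pos n _ (by have : (0:ℝ) ≤ k := Nat.cast_nonneg k; linarith)

lemma poch_pos (σ : ℝ) (n k : ℕ) (h : 0 < σ - ((n:ℝ) - 1)) : 0 < poch σ n k :=
  div_pos (ascPochhammer_pos n _ h) (poch_denom_pos σ n k h)

lemma poch_le_one (σ : ℝ) (n k : ℕ) (h : 0 < σ - ((n:ℝ) - 1)) : poch σ n k ≤ 1 := by
  rw [poch, div_le_one (poch_denom_pos σ n k h)]
  exact asc_mono n h (by have : (0:ℝ) ≤ k := Nat.cast_nonneg k; linarith)

lemma poch_succ (σ : ℝ) (n k : ℕ) (h : 0 < σ - (n:ℝ)) :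
    poch σ (n+1) k = (σ - n) / (σ + k - n) * poch σ n k := by
  have hk : (0:ℝ) ≤ k := Nat.cast_nonneg k
  have h1 : 0 < σ - ((n:ℝ) - 1) := by linarith
  have e1 : σ - (((n:ℝ)+1) - 1) = σ - n := by ring
  have e2 : σ + k - (((n:ℝ)+1) - 1) = σ + k - n := by ring
  rw [poch, poch]
  push_cast
  rw [e1, e2, asc_succ_left_eval, asc_succ_left_eval,
    show σ - (n:ℝ) + 1 = σ - ((n:ℝ)-1) by ring, show σ + k - (n:ℝ) + 1 = σ + k - ((n:ℝ)-1) by ring]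
  rw [div_mul_div_comm]

lemma summable_poch (σ : ℝ) (n : ℕ) (h : 0 < σ - ((n:ℝ) - 1)) {r : ℝ} (hr0 : 0 ≤ r) (hr : r < 1) :
    Summable (fun k : ℕ => poch σ n (k+1) * r ^ (k+1)) := by
  apply Summable.of_nonneg_of_le (fun k => ?_) (fun k => ?_)
    ((summable_geometric_of_lt_one hr0 hr).mul_left r)
  · exact mul_nonneg (le_of_lt (poch_pos σ n (k+1) h)) (by positivity)
  · calc poch σ n (k+1) * r ^ (k+1) ≤ 1 * r ^ (k+1) :=
        mul_le_mul_of_nonneg_right (poch_le_one σ n (k+1) h) (by positivity)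
    _ = r * r ^ k := by ring

lemma cara_bound {p : ℂ → ℂ} (hp : IsCara p) {z : ℂ} (hz : ‖z‖ < 1) :
    ‖p z‖ ≤ (1 + ‖z‖) / (1 - ‖z‖) := by
  obtain ⟨hd, h0, hre⟩ := hp
  have hne : ∀ ζ ∈ Metric.ball (0:ℂ) 1, p ζ + 1 ≠ 0 := by
    intro ζ hζ hc
    have : (p ζ + 1).re = 0 := by rw [hc]; simp
    simp only [add_re, one_re] at this
    have := hre ζ hζ; linarith
  set w : ℂ → ℂ := fun ζ => (p ζ - 1) / (p ζ + 1) with hw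
  have hwd : DifferentiableOn ℂ w (Metric.ball 0 1) :=
    (hd.sub (differentiableOn_const 1)).div (hd.add (differentiableOn_const 1)) hne
  have hw0 : w 0 = 0 := by simp [hw, h0]
  have hmaps : Set.MapsTo w (Metric.ball (0:ℂ) 1) (Metric.ball (0:ℂ) 1) := by
    intro ζ hζ
    rw [Metric.mem_ball, dist_zero_right, hw]
    have h2 := hre ζ hζ
    have hne' := hne ζ hζ
    rw [norm_div, div_lt_one (norm_pos_iff.mpr hne')]
    have : ‖p ζ - 1‖ ^ 2 < ‖p ζ + 1‖ ^ 2 := by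
      rw [← Complex.normSq_eq_norm_sq, ← Complex.normSq_eq_norm_sq]
      simp only [Complex.normSq_apply, Complex.sub_re, Complex.sub_im, Complex.add_re,
        Complex.add_im, Complex.one_re, Complex.one_im]
      nlinarith
    have h3 : (0:ℝ) ≤ ‖p ζ - 1‖ := by positivity
    have h4 : (0:ℝ) ≤ ‖p ζ + 1‖ := by positivity
    simpa using (pow_lt_pow_iff_left₀ h3 h4 (by norm_num)).mp this
  have hzb : z ∈ Metric.ball (0:ℂ) 1 := by rwa [Metric.mem_ball, dist_zero_right]
  have hsch : ‖w z‖ ≤ ‖z‖ :=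
    Complex.norm_le_norm_of_mapsTo_ball hwd (hmaps.mono_right Metric.ball_subset_closedBall) hw0 hz
  have hwz : ‖w z‖ ≤ ‖z‖ := hsch
  have hwlt : ‖w z‖ < 1 := lt_of_le_of_lt hwz hz
  have hone : (1:ℂ) - w z ≠ 0 := by
    intro hc
    have : ‖(1:ℂ) - w z‖ = 0 := by rw [hc]; simp
    have h5 : (1:ℝ) - ‖w z‖ ≤ ‖(1:ℂ) - w z‖ := by
      have := norm_sub_norm_le (1:ℂ) (w z); simpa using this
    rw [this] at h5; linarith
  have hpz : p z = (1 + w z) / (1 - w z) := by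
    have hne' := hne z hzb
    have hmul : w z * (p z + 1) = p z - 1 := by
      rw [hw]; field_simp
    rw [eq_div_iff hone]
    linear_combination -hmul
  rw [hpz, norm_div]
  have hnum : ‖(1:ℂ) + w z‖ ≤ 1 + ‖w z‖ := by
    simpa using norm_add_le (1:ℂ) (w z)
  have hden : 1 - ‖w z‖ ≤ ‖(1:ℂ) - w z‖ := by
    have := norm_sub_norm_le (1:ℂ) (w z); simpa using this
  have hden0 : (0:ℝ) < 1 - ‖w z‖ := by linarith
  calc ‖(1:ℂ) + w z‖ / ‖(1:ℂ) - w z‖ ≤ (1 + ‖w z‖) / (1 - ‖w z‖) :=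
        div_le_div₀ (by positivity) hnum hden0 hden
    _ ≤ (1 + ‖z‖) / (1 - ‖z‖) := by
        rw [div_le_div_iff₀ hden0 (by linarith)]
        nlinarith [norm_nonneg z, norm_nonneg (w z)]

lemma step_bound (σ : ℝ) (n : ℕ) (hσn : 0 < σ - (n:ℝ)) (p : ℂ → ℂ)
    (IH : ∀ w : ℂ, ‖w‖ < 1 → ‖sigmaIter σ n p w‖ ≤ 1 + 2 * ∑' k : ℕ, poch σ n (k+1) * ‖w‖^(k+1))
    (z : ℂ) (hz : ‖z‖ < 1) :
    ‖sigmaIter σ (n+1) p z‖ ≤ 1 + 2 * ∑' k : ℕ, poch σ (n+1) (k+1) * ‖z‖^(k+1) := by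
  have h1 : 0 < σ - ((n:ℝ) - 1) := by linarith
  set r : ℝ := ‖z‖ with hrdef
  have hr0 : 0 ≤ r := norm_nonneg z
  set a : ℝ := σ - ((n:ℝ) + 1) with hadef
  have ha : -1 < a := by rw [hadef]; linarith
  set c : ℕ → ℝ := fun k => poch σ n (k+1) * r ^ (k+1) with hcdef
  have hc0 : ∀ k, 0 ≤ c k := fun k => mul_nonneg (poch_pos σ n (k+1) h1).le (by positivity)
  have hcsum : Summable c := summable_poch σ n h1 hr0 hz
  set C : ℝ := ∑' k, c k with hCdef
  set h : ℝ → ℝ := fun s => ∑' k, c k * s ^ (k+1) with hhdef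
  -- continuity of h on [0,1]
  have hcont : ContinuousOn h (Set.Icc (-1:ℝ) 1) := by
    apply continuousOn_tsum
      (fun k => (continuous_const.mul (continuous_pow (k+1))).continuousOn) hcsum
    intro k s hs
    have habs : |s| ≤ 1 := abs_le.mpr ⟨hs.1, hs.2⟩
    calc ‖c k * s^(k+1)‖ = c k * |s|^(k+1) := by
          rw [norm_mul, norm_pow, Real.norm_eq_abs, Real.norm_eq_abs, _root_.abs_of_nonneg (hc0 k)]
      _ ≤ c k * 1 ^ (k+1) := by
          apply mul_le_mul_of_nonneg_left (pow_le_pow_left₀ (abs_nonneg s) habs (k+1)) (hc0 k)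
      _ = c k := by ring
  -- pointwise facts on Ioc
  have hIoc : ∀ s ∈ Set.Ioc (0:ℝ) 1, (0:ℝ) ≤ h s ∧ h s ≤ C := by
    intro s hs
    have hs0 : 0 < s := hs.1
    have hsum_s : Summable (fun k => c k * s ^ (k+1)) := by
      apply Summable.of_nonneg_of_le
        (fun k => mul_nonneg (hc0 k) (pow_nonneg hs0.le _)) (fun k => ?_) hcsum
      calc c k * s^(k+1) ≤ c k * 1^(k+1) :=
            mul_le_mul_of_nonneg_left (pow_le_pow_left₀ hs0.le hs.2 (k+1)) (hc0 k)
        _ = c k := by ring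
    constructor
    · exact tsum_nonneg (fun k => mul_nonneg (hc0 k) (pow_nonneg hs0.le _))
    · apply Summable.tsum_le_tsum (fun k => ?_) hsum_s hcsum
      calc c k * s^(k+1) ≤ c k * 1^(k+1) :=
            mul_le_mul_of_nonneg_left (pow_le_pow_left₀ hs0.le hs.2 (k+1)) (hc0 k)
        _ = c k := by ring
  set G : ℝ → ℝ := fun s => s ^ a * (1 + 2 * h s) with hGdef
  -- measurability
  have hmeas : AEStronglyMeasurable G (volume.restrict (Set.Ioc (0:ℝ) 1)) := by
    apply AEStronglyMeasurable.mul
    · refine ContinuousOn.aestronglyMeasurable ?_ measurableSet_Ioc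
      intro s hs
      exact (Real.continuousAt_rpow_const s a (Or.inl hs.1.ne')).continuousWithinAt
    · apply AEStronglyMeasurable.add aestronglyMeasurable_const
      apply AEStronglyMeasurable.const_mul
      exact ((hcont.mono (by intro x hx; exact ⟨by linarith [hx.1], hx.2⟩)).aestronglyMeasurable
        measurableSet_Ioc)
  -- dominating function
  have hdom : IntegrableOn (fun s => (1 + 2*C) * s ^ a) (Set.Ioc (0:ℝ) 1) volume :=
    ((intervalIntegrable_iff_integrableOn_Ioc_of_le zero_le_one).mp
      (intervalIntegral.intervalIntegrable_rpow' ha)).const_mul _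
  have hGint' : IntegrableOn G (Set.Ioc (0:ℝ) 1) volume := by
    apply Integrable.mono' hdom hmeas
    rw [ae_restrict_iff' measurableSet_Ioc]
    filter_upwards with s hs
    have h2 := hIoc s hs
    have hsa : (0:ℝ) ≤ s ^ a := Real.rpow_nonneg hs.1.le a
    have hC0 : 0 ≤ C := le_trans h2.1 h2.2
    have hGs : G s = s ^ a * (1 + 2 * h s) := rfl
    rw [Real.norm_eq_abs, hGs, _root_.abs_of_nonneg (by nlinarith)]
    nlinarith
  have hGint : IntervalIntegrable G volume 0 1 :=
    (intervalIntegrable_iff_integrableOn_Ioc_of_le zero_le_one).mpr hGint'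
  -- the a.e. bound
  have hbound : ∀ᵐ s ∂volume.restrict (Set.uIoc (0:ℝ) 1),
      ‖((s ^ a : ℝ) : ℂ) * sigmaIter σ n p ((s:ℂ) * z)‖ ≤ G s := by
    rw [Set.uIoc_of_le zero_le_one, ae_restrict_iff' measurableSet_Ioc]
    filter_upwards with s hs
    have hs0 : 0 < s := hs.1
    have hsa : (0:ℝ) ≤ s ^ a := Real.rpow_nonneg hs0.le a
    have hnz : ‖(s:ℂ) * z‖ = s * r := by
      rw [norm_mul, Complex.norm_real, Real.norm_eq_abs, _root_.abs_of_nonneg hs0.le]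
    have hlt : s * r < 1 := lt_of_le_of_lt (mul_le_of_le_one_left hr0 hs.2) hz
    have hIH := IH ((s:ℂ) * z) (by rw [hnz]; exact hlt)
    rw [hnz] at hIH
    have htsum : ∑' k : ℕ, poch σ n (k+1) * (s*r)^(k+1) = h s := by
      apply tsum_congr; intro k
      simp only [hcdef]; ring
    rw [htsum] at hIH
    rw [norm_mul, Complex.norm_real, Real.norm_eq_abs, _root_.abs_of_nonneg hsa]
    have hGs : G s = s ^ a * (1 + 2 * h s) := rfl
    rw [hGs]
    have hQ0 : (0:ℝ) ≤ ‖sigmaIter σ n p ((s:ℂ) * z)‖ := norm_nonneg _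
    nlinarith
  -- the norm estimate
  have hnorm : ‖sigmaIter σ (n+1) p z‖ ≤ (σ - n) * |∫ s in (0:ℝ)..1, G s| := by
    have hrepr : sigmaIter σ (n+1) p z = ((σ - (n:ℝ)) : ℂ) *
        ∫ s in (0:ℝ)..1, ((s ^ (σ - ((n:ℝ) + 1)) : ℝ) : ℂ) * sigmaIter σ n p ((s:ℂ) * z) := rfl
    rw [hrepr, norm_mul]
    have : ‖((σ - (n:ℝ)) : ℂ)‖ = σ - n := by
      rw [show ((σ - (n:ℝ)) : ℂ) = ((σ - (n:ℝ) : ℝ) : ℂ) by push_cast; ring,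
        Complex.norm_real, Real.norm_eq_abs, abs_of_pos hσn]
    rw [this]
    exact mul_le_mul_of_nonneg_left
      (intervalIntegral.norm_integral_le_abs_of_norm_le hbound hGint) hσn.le
  -- the integral computation
  set b : ℕ → ℝ := fun k => a + ((k:ℝ) + 1) with hbdef
  have hbk : ∀ k : ℕ, (-1:ℝ) < b k := by
    intro k
    have hk : (0:ℝ) ≤ k := Nat.cast_nonneg k
    simp only [hbdef, hadef]; linarith
  have hbk1 : ∀ k : ℕ, (1:ℝ) ≤ b k + 1 := by
    intro k
    have hk : (0:ℝ) ≤ k := Nat.cast_nonneg k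
    simp only [hbdef, hadef]; linarith
  set F : ℕ → ℝ → ℝ := fun k s => 2 * c k * s ^ (b k) with hFdef
  have hFint : ∀ k, IntegrableOn (F k) (Set.Ioc (0:ℝ) 1) volume := fun k =>
    ((intervalIntegrable_iff_integrableOn_Ioc_of_le zero_le_one).mp
      (intervalIntegral.intervalIntegrable_rpow' (hbk k))).const_mul _
  have hFval : ∀ k, ∫ s in Set.Ioc (0:ℝ) 1, F k s = 2 * c k / (b k + 1) := by
    intro k
    rw [← intervalIntegral.integral_of_le zero_le_one]
    have : (∫ s in (0:ℝ)..1, F k s) = ∫ s in (0:ℝ)..1, (2 * c k) * s ^ (b k) := rfl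
    rw [this, intervalIntegral.integral_const_mul, integral_rpow (Or.inl (hbk k)),
      Real.one_rpow, Real.zero_rpow (by linarith [hbk1 k] : (0:ℝ) < b k + 1).ne']
    ring
  have hFnn : ∀ k, ∀ s ∈ Set.Ioc (0:ℝ) 1, 0 ≤ F k s := by
    intro k s hs
    exact mul_nonneg (by linarith [hc0 k]) (Real.rpow_nonneg hs.1.le _)
  have hFnormval : ∀ k, (∫ s in Set.Ioc (0:ℝ) 1, ‖F k s‖) = 2 * c k / (b k + 1) := by
    intro k
    rw [← hFval k]
    apply setIntegral_congr_fun measurableSet_Ioc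
    intro s hs
    show ‖F k s‖ = F k s
    rw [Real.norm_eq_abs, _root_.abs_of_nonneg (hFnn k s hs)]
  have hFsum : Summable (fun k => ∫ s in Set.Ioc (0:ℝ) 1, ‖F k s‖) := by
    have : Summable (fun k => 2 * c k) := hcsum.mul_left 2
    apply Summable.of_nonneg_of_le (fun k => ?_) (fun k => ?_) this
    · rw [hFnormval k]
      exact div_nonneg (by linarith [hc0 k]) (by linarith [hbk1 k])
    · rw [hFnormval k]
      exact div_le_self (by linarith [hc0 k]) (hbk1 k)
  have hswap : (∑' k, ∫ s in Set.Ioc (0:ℝ) 1, F k s)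
      = ∫ s in Set.Ioc (0:ℝ) 1, (∑' k, F k s) :=
    MeasureTheory.integral_tsum_of_summable_integral_norm (fun k => hFint k) hFsum
  have hTG : ∀ s ∈ Set.Ioc (0:ℝ) 1, (∑' k, F k s) = 2 * (s ^ a * h s) := by
    intro s hs
    have hs0 : 0 < s := hs.1
    have hFs : ∀ k : ℕ, F k s = (2 * s ^ a) * (c k * s ^ (k+1)) := by
      intro k
      have e1 : b k = a + (((k+1 : ℕ)):ℝ) := by simp only [hbdef]; push_cast; ring
      have : F k s = 2 * c k * s ^ (b k) := rfl
      rw [this, e1, Real.rpow_add hs0, Real.rpow_natCast]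
      ring
    calc (∑' k, F k s) = ∑' k, (2 * s ^ a) * (c k * s ^ (k+1)) := tsum_congr hFs
      _ = (2 * s ^ a) * h s := tsum_mul_left
      _ = 2 * (s ^ a * h s) := by ring
  have hsa_int : IntegrableOn (fun s : ℝ => s ^ a) (Set.Ioc (0:ℝ) 1) volume :=
    (intervalIntegrable_iff_integrableOn_Ioc_of_le zero_le_one).mp
      (intervalIntegral.intervalIntegrable_rpow' ha)
  have hT_int : IntegrableOn (fun s : ℝ => 2 * (s ^ a * h s)) (Set.Ioc (0:ℝ) 1) volume := by
    have h0 : IntegrableOn (fun s : ℝ => G s - s ^ a) (Set.Ioc (0:ℝ) 1) volume :=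
      hGint'.sub hsa_int
    apply h0.congr (Filter.Eventually.of_forall fun s => ?_)
    show G s - s ^ a = 2 * (s ^ a * h s)
    have hGs : G s = s ^ a * (1 + 2 * h s) := rfl
    rw [hGs]; ring
  have hsplit : (∫ s in Set.Ioc (0:ℝ) 1, G s)
      = (∫ s in Set.Ioc (0:ℝ) 1, (s : ℝ) ^ a) + ∑' k, 2 * c k / (b k + 1) := by
    have hG2 : Set.EqOn G (fun s => s ^ a + 2 * (s ^ a * h s)) (Set.Ioc (0:ℝ) 1) := by
      intro s _
      have : G s = s ^ a * (1 + 2 * h s) := rfl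
      rw [this]; ring
    rw [setIntegral_congr_fun measurableSet_Ioc hG2, integral_add hsa_int hT_int]
    congr 1
    rw [← setIntegral_congr_fun measurableSet_Ioc hTG, ← hswap]
    exact tsum_congr hFval
  have hsa_val : (∫ s in Set.Ioc (0:ℝ) 1, (s : ℝ) ^ a) = 1 / (σ - n) := by
    rw [← intervalIntegral.integral_of_le zero_le_one, integral_rpow (Or.inl ha),
      Real.one_rpow, Real.zero_rpow (by simp only [hadef]; intro hc; linarith)]
    simp only [hadef]
    ring_nf
  have htsum_nn : 0 ≤ ∑' k, 2 * c k / (b k + 1) :=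
    tsum_nonneg fun k => div_nonneg (by linarith [hc0 k]) (by linarith [hbk1 k])
  have hval_nn : 0 ≤ 1 / (σ - n) + ∑' k, 2 * c k / (b k + 1) := by
    have : 0 ≤ 1 / (σ - n) := by positivity
    linarith
  have hIval : (∫ s in (0:ℝ)..1, G s) = 1 / (σ - n) + ∑' k, 2 * c k / (b k + 1) := by
    rw [intervalIntegral.integral_of_le zero_le_one, hsplit, hsa_val]
  have hterm : ∀ k : ℕ, (σ - n) * (2 * c k / (b k + 1))
      = 2 * (poch σ (n+1) (k+1) * r ^ (k+1)) := by
    intro k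
    have hps := poch_succ σ n (k+1) hσn
    push_cast at hps
    rw [hps]
    have hD : b k + 1 = σ + ((k:ℝ) + 1) - n := by simp only [hbdef, hadef]; ring
    rw [hD]
    simp only [hcdef]
    ring
  calc ‖sigmaIter σ (n+1) p z‖ ≤ (σ - n) * |∫ s in (0:ℝ)..1, G s| := hnorm
    _ = (σ - n) * (1 / (σ - n) + ∑' k, 2 * c k / (b k + 1)) := by
        rw [hIval, _root_.abs_of_nonneg hval_nn]
    _ = 1 + 2 * ∑' k : ℕ, poch σ (n+1) (k+1) * r ^ (k+1) := by
        have e1 : (σ - n) * ∑' k, 2 * c k / (b k + 1)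
            = ∑' k, (σ - n) * (2 * c k / (b k + 1)) := tsum_mul_left.symm
        rw [mul_add, mul_one_div, div_self (ne_of_gt hσn), e1, tsum_congr hterm, tsum_mul_left]

lemma base_bound (σ : ℝ) (p : ℂ → ℂ) (hp : IsCara p) (z : ℂ) (hz : ‖z‖ < 1) :
    ‖sigmaIter σ 0 p z‖ ≤ 1 + 2 * ∑' k : ℕ, poch σ 0 (k+1) * ‖z‖^(k+1) := by
  have hr0 : 0 ≤ ‖z‖ := norm_nonneg z
  have hpoch : ∀ k : ℕ, poch σ 0 (k+1) = 1 := by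
    intro k
    simp [poch, ascPochhammer_zero]
  have htsum : ∑' k : ℕ, poch σ 0 (k+1) * ‖z‖^(k+1) = ‖z‖ * (1 - ‖z‖)⁻¹ := by
    have e : ∀ k : ℕ, poch σ 0 (k+1) * ‖z‖^(k+1) = ‖z‖ * ‖z‖^k := by
      intro k; rw [hpoch k]; ring
    rw [tsum_congr e, tsum_mul_left, tsum_geometric_of_lt_one hr0 hz]
  have hb : ‖sigmaIter σ 0 p z‖ = ‖p z‖ := rfl
  rw [hb, htsum]
  have hcb := cara_bound hp hz
  have h1 : (0:ℝ) < 1 - ‖z‖ := by linarith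
  calc ‖p z‖ ≤ (1 + ‖z‖) / (1 - ‖z‖) := hcb
    _ = 1 + 2 * (‖z‖ * (1 - ‖z‖)⁻¹) := by
        rw [div_eq_iff (by linarith : (1:ℝ) - ‖z‖ ≠ 0)]
        have h2 : ‖z‖ * (1 - ‖z‖)⁻¹ * (1 - ‖z‖) = ‖z‖ := by
          rw [mul_assoc, inv_mul_cancel₀ (by linarith : (1:ℝ) - ‖z‖ ≠ 0), mul_one]
        linear_combination -2 * h2

lemma iter_bound (σ : ℝ) (p : ℂ → ℂ) (hp : IsCara p) (n : ℕ) :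
    0 < σ - ((n:ℝ) - 1) → ∀ z : ℂ, ‖z‖ < 1 →
    ‖sigmaIter σ n p z‖ ≤ 1 + 2 * ∑' k : ℕ, poch σ n (k+1) * ‖z‖^(k+1) := by
  induction n with
  | zero => intro _ z hz; exact base_bound σ p hp z hz
  | succ m ih =>
    intro hσ z hz
    have hσm : 0 < σ - (m:ℝ) := by push_cast at hσ; linarith
    exact step_bound σ m hσm p (fun w hw => ih (by linarith) w hw) z hz

/-- Growth upper bound for members of `P_n^σ`:
`|p_{σ,n}(z)| ≤ 1 + 2 Σ_{k≥1} [σ]_{n/k} r^k` for `|z| = r < 1`. -/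
theorem stmt7 (σ : ℝ) (n : ℕ) (hσ : 0 < σ - ((n : ℝ) - 1))
    (q : ℂ → ℂ) (hq : MemPn σ n q)
    (z : ℂ) (r : ℝ) (hz : ‖z‖ = r) (hr : r < 1) :
    ‖q z‖ ≤ 1 + 2 * ∑' k : ℕ, poch σ n (k + 1) * r ^ (k + 1) := by
  obtain ⟨p, hp, heq⟩ := hq
  subst hz
  have hzb : z ∈ Metric.ball (0:ℂ) 1 := by
    rw [Metric.mem_ball, dist_zero_right]; exact hr
  rw [heq z hzb]
  exact iter_bound σ p hp n hσ z hr
end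

section
/- If f ∈ B_n^σ(β) with Taylor expansion f(z) = z + Σ_{k≥2} a_k z^k, then |a_k| ≤ 2(1−β)·(σ-(n-1))_n/(σ+k-1-(n-1))_n for all k ≥ 2, and these bounds are sharp. -/
open Complex MeasureTheory

set_option linter.unusedVariables false

open Filter Topology
open scoped NNReal ENNReal


noncomputable def multc (σ : ℝ) (m k : ℕ) : ℝ := ∏ j ∈ Finset.range m, (σ - j) / (σ - j + k)

lemma poch_eq_multc (σ : ℝ) (n k : ℕ) : poch σ n k = multc σ n k := by
  induction n generalizing σ with
  | zero => simp [poch, multc]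
  | succ n ih =>
    have ev : ∀ x : ℝ, (ascPochhammer ℝ (n+1)).eval x
        = x * (ascPochhammer ℝ n).eval (x + 1) := by
      intro x
      rw [ascPochhammer_succ_left]
      simp [Polynomial.eval_comp]
    have h1 : σ - ((n:ℝ) + 1 - 1) + 1 = σ - ((n:ℝ) - 1) := by ring
    have h2 : σ + (k:ℝ) - ((n:ℝ) + 1 - 1) + 1 = σ + (k:ℝ) - ((n:ℝ) - 1) := by ring
    have key : poch σ (n+1) k = poch σ n k * ((σ - n) / (σ - n + k)) := by
      rw [poch, poch, ev, ev]
      simp only [Nat.cast_add, Nat.cast_one]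
      rw [h1, h2, mul_div_mul_comm]
      ring
    rw [key, ih, multc, multc, Finset.prod_range_succ]

lemma multc_pos (σ : ℝ) (n : ℕ) (hσ : (n:ℝ) - 1 < σ) (k : ℕ) : 0 < multc σ n k := by
  apply Finset.prod_pos
  intro j hj
  have hj' : (j:ℝ) ≤ (n:ℝ) - 1 := by
    have := Finset.mem_range.mp hj
    have : (j:ℝ) + 1 ≤ (n:ℝ) := by exact_mod_cast this
    linarith
  have h1 : 0 < σ - j := by linarith
  have h2 : 0 < σ - j + k := by positivity
  positivity

lemma multc_le_one (σ : ℝ) (n : ℕ) (hσ : (n:ℝ) - 1 < σ) (k : ℕ) : multc σ n k ≤ 1 := by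
  apply Finset.prod_le_one
  · intro j hj
    have hj' : (j:ℝ) ≤ (n:ℝ) - 1 := by
      have := Finset.mem_range.mp hj
      have : (j:ℝ) + 1 ≤ (n:ℝ) := by exact_mod_cast this
      linarith
    have h1 : 0 < σ - j := by linarith
    have h2 : 0 < σ - j + k := by positivity
    positivity
  · intro j hj
    have hj' : (j:ℝ) ≤ (n:ℝ) - 1 := by
      have := Finset.mem_range.mp hj
      have : (j:ℝ) + 1 ≤ (n:ℝ) := by exact_mod_cast this
      linarith
    have h1 : 0 < σ - j := by linarith
    have h2 : (0:ℝ) ≤ σ - j + k := by positivity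
    exact div_le_one_of_le₀ (le_add_of_nonneg_right (Nat.cast_nonneg k)) h2

lemma multc_zero (σ : ℝ) (n : ℕ) (hσ : (n:ℝ) - 1 < σ) : multc σ n 0 = 1 := by
  rw [multc]
  apply Finset.prod_eq_one
  intro j hj
  have hj' : (j:ℝ) ≤ (n:ℝ) - 1 := by
    have := Finset.mem_range.mp hj
    have : (j:ℝ) + 1 ≤ (n:ℝ) := by exact_mod_cast this
    linarith
  have h1 : 0 < σ - j := by linarith
  simp [div_self h1.ne']

lemma integral_exp_int {t : ℤ} (ht : t ≠ 0) :
    ∫ θ in (0:ℝ)..(2*Real.pi), Complex.exp (t * θ * Complex.I) = 0 := by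
  have hrw : ∀ θ : ℝ, (t:ℂ) * θ * Complex.I = ((t:ℂ) * Complex.I) * θ := fun θ => by ring
  simp only [hrw]
  rw [integral_exp_mul_complex (by simp [ht, Complex.I_ne_zero])]
  have h1 : (t:ℂ) * Complex.I * ((2*Real.pi : ℝ) : ℂ) = (t:ℂ) * (2 * (Real.pi:ℂ) * Complex.I) := by
    push_cast; ring
  rw [h1, Complex.exp_int_mul_two_pi_mul_I]
  simp

lemma integral_exp_zero :
    ∫ θ in (0:ℝ)..(2*Real.pi), Complex.exp ((0:ℤ) * θ * Complex.I) = 2 * Real.pi := by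
  norm_num

lemma intervalIntegral_conj {f : ℝ → ℂ} {a b : ℝ} :
    ∫ θ in a..b, (starRingEnd ℂ) (f θ) = (starRingEnd ℂ) (∫ θ in a..b, f θ) := by
  rw [intervalIntegral.intervalIntegral_eq_integral_uIoc,
    intervalIntegral.intervalIntegral_eq_integral_uIoc, integral_conj]
  rcases le_or_gt a b with h | h
  · simp [h]
  · simp [not_le.mpr h]

lemma intervalIntegral_re {f : ℝ → ℂ} {a b : ℝ} (hab : a ≤ b)
    (hf : IntervalIntegrable f volume a b) :
    ∫ θ in a..b, (f θ).re = (∫ θ in a..b, f θ).re := by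
  rw [intervalIntegral.integral_of_le hab, intervalIntegral.integral_of_le hab]
  exact integral_re hf.1

lemma exists_hasSum_of_differentiableOn {g : ℂ → ℂ}
    (hg : DifferentiableOn ℂ g (Metric.ball 0 1)) :
    ∃ c : ℕ → ℂ, ∀ z ∈ Metric.ball (0:ℂ) 1, HasSum (fun k => c k * z ^ k) (g z) := by
  have H : ∀ r : ℝ≥0, 0 < r → (r:ℝ) < 1 →
      HasFPowerSeriesOnBall g (cauchyPowerSeries g 0 r) 0 r := by
    intro r hr0 hr1
    refine DifferentiableOn.hasFPowerSeriesOnBall (hg.mono ?_) hr0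
    intro w hw
    simp only [Metric.mem_closedBall, Metric.mem_ball, dist_zero_right] at hw ⊢
    exact lt_of_le_of_lt hw hr1
  refine ⟨(cauchyPowerSeries g 0 (1/2 : ℝ≥0)).coeff, fun z hz => ?_⟩
  have hz1 : ‖z‖ < 1 := by simpa [Metric.mem_ball, dist_zero_right] using hz
  have hzn : (0:ℝ) ≤ ‖z‖ := norm_nonneg z
  have hza : ‖z‖ < 1 := hz1
  have hzb : (0:ℝ) ≤ ‖z‖ := hzn
  set rr : ℝ := (‖z‖ + 1) / 2 with hrr
  have hrr0 : 0 < rr := by positivity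
  set r : ℝ≥0 := ⟨rr, hrr0.le⟩ with hr
  have hr0 : 0 < r := by exact_mod_cast hrr0
  have hr1 : (r:ℝ) < 1 := by show rr < 1; linarith [hrr]
  have hzr : ‖z‖ < (r:ℝ) := by show ‖z‖ < rr; linarith [hrr]
  have h1 := H (1/2) (by norm_num) (by norm_num)
  have h2 := H r hr0 hr1
  have hps : cauchyPowerSeries g 0 (1/2 : ℝ≥0) = cauchyPowerSeries g 0 r :=
    h1.hasFPowerSeriesAt.eq_formalMultilinearSeries h2.hasFPowerSeriesAt
  rw [hps]
  have hmem : z ∈ Metric.eball (0:ℂ) r := by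
    rw [Metric.emetric_ball_nnreal]
    simpa [Metric.mem_ball, dist_zero_right] using hzr
  have := h2.hasSum hmem
  simpa [FormalMultilinearSeries.apply_eq_pow_smul_coeff, smul_eq_mul, mul_comm] using this

lemma norm_exp_real_mul_I (x : ℝ) : ‖Complex.exp ((x:ℂ) * Complex.I)‖ = 1 :=
  Complex.norm_exp_ofReal_mul_I x

lemma circle_coeff {p : ℂ → ℂ} (c : ℕ → ℂ)
    (hsum : ∀ z ∈ Metric.ball (0:ℂ) 1, HasSum (fun k => c k * z ^ k) (p z))
    {r : ℝ} (hr0 : 0 < r) (hr1 : r < 1) (d : ℤ) :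
    HasSum
      (fun m : ℕ => c m * (r:ℂ) ^ m *
        ∫ θ in (0:ℝ)..(2*Real.pi), Complex.exp ((((m:ℤ) + d) : ℤ) * θ * Complex.I))
      (∫ θ in (0:ℝ)..(2*Real.pi),
        p ((r:ℂ) * Complex.exp (θ * Complex.I)) * Complex.exp (d * θ * Complex.I)) := by
  have h2π : (0:ℝ) ≤ 2*Real.pi := by positivity
  set μ := volume.restrict (Set.Ioc (0:ℝ) (2*Real.pi)) with hμ
  set F : ℕ → ℝ → ℂ := fun m θ => c m * ((r:ℂ) * Complex.exp (θ * Complex.I)) ^ m *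
      Complex.exp (d * θ * Complex.I) with hF
  have hw : ∀ θ : ℝ, (r:ℂ) * Complex.exp (θ * Complex.I) ∈ Metric.ball (0:ℂ) 1 := by
    intro θ
    simp only [Metric.mem_ball, dist_zero_right, norm_mul, Complex.norm_real,
      Real.norm_eq_abs, abs_of_pos hr0, norm_exp_real_mul_I, mul_one]
    exact hr1
  have hcont : ∀ m, Continuous (F m) := by
    intro m
    have e1 : Continuous fun θ : ℝ => Complex.exp ((θ:ℂ) * Complex.I) :=
      (Complex.continuous_ofReal.mul continuous_const).cexp
    have e2 : Continuous fun θ : ℝ => Complex.exp ((d:ℂ) * (θ:ℂ) * Complex.I) :=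
      ((continuous_const.mul Complex.continuous_ofReal).mul continuous_const).cexp
    exact (continuous_const.mul ((continuous_const.mul e1).pow m)).mul e2
  have hnorm : ∀ m θ, ‖F m θ‖ = ‖c m‖ * r ^ m := by
    intro m θ
    have : (d:ℂ) * (θ:ℂ) * Complex.I = ((d * θ : ℝ):ℂ) * Complex.I := by push_cast; ring
    simp [hF, norm_mul, norm_pow, Complex.norm_real, Real.norm_eq_abs, abs_of_pos hr0,
      norm_exp_real_mul_I, this]
  have hInt : ∀ m, Integrable (F m) μ := fun m => (hcont m).integrableOn_Ioc
  have S : Summable fun m => ‖c m‖ * r ^ m := by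
    have hrball : (r:ℂ) ∈ Metric.ball (0:ℂ) 1 := by
      simp [Metric.mem_ball, dist_zero_right, Complex.norm_real, Real.norm_eq_abs,
        abs_of_pos hr0]
      exact hr1
    have h1 := summable_norm_iff.mpr (hsum (r:ℂ) hrball).summable
    simpa [norm_mul, norm_pow, Complex.norm_real, Real.norm_eq_abs, abs_of_pos hr0] using h1
  have hIntNorm : Summable fun m => ∫ θ, ‖F m θ‖ ∂μ := by
    have : (fun m => ∫ θ, ‖F m θ‖ ∂μ) = fun m => (‖c m‖ * r ^ m) * (2*Real.pi) := by
      funext m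
      simp only [hnorm]
      rw [integral_const]
      simp only [hμ, Measure.restrict_apply_univ, Real.volume_Ioc, sub_zero, smul_eq_mul]
      rw [measureReal_def, Measure.restrict_apply_univ, Real.volume_Ioc, sub_zero,
        ENNReal.toReal_ofReal h2π]
      ring
    rw [this]
    exact S.mul_right _
  have H := hasSum_integral_of_summable_integral_norm (μ := μ) hInt hIntNorm
  have hts : ∀ θ : ℝ, (∑' m, F m θ)
      = p ((r:ℂ) * Complex.exp (θ * Complex.I)) * Complex.exp (d * θ * Complex.I) := by
    intro θ
    exact ((hsum _ (hw θ)).mul_right _).tsum_eq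
  have hterm : ∀ m, ∫ θ, F m θ ∂μ = c m * (r:ℂ) ^ m *
      ∫ θ in (0:ℝ)..(2*Real.pi), Complex.exp ((((m:ℤ) + d) : ℤ) * θ * Complex.I) := by
    intro m
    have hFeq : ∀ θ : ℝ, F m θ
        = (c m * (r:ℂ) ^ m) * Complex.exp ((((m:ℤ) + d) : ℤ) * θ * Complex.I) := by
      intro θ
      simp only [hF]
      have harg : ((((m:ℤ) + d) : ℤ) : ℂ) * θ * Complex.I
          = (m:ℂ) * ((θ:ℂ) * Complex.I) + (d:ℂ) * θ * Complex.I := by push_cast; ring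
      rw [mul_pow, ← Complex.exp_nat_mul, harg, Complex.exp_add]
      ring
    simp only [hFeq]
    rw [MeasureTheory.integral_const_mul, intervalIntegral.integral_of_le h2π]
  rw [intervalIntegral.integral_of_le h2π]
  have hfin : ∫ θ, (∑' m, F m θ) ∂μ
      = ∫ θ in Set.Ioc (0:ℝ) (2*Real.pi),
          p ((r:ℂ) * Complex.exp (θ * Complex.I)) * Complex.exp (d * θ * Complex.I) := by
    exact integral_congr_ae (Filter.Eventually.of_forall fun θ => hts θ)
  rw [← hfin]
  have := H
  simp only [hterm] at this
  exact this

lemma circle_single {p : ℂ → ℂ} (c : ℕ → ℂ)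
    (hsum : ∀ z ∈ Metric.ball (0:ℂ) 1, HasSum (fun k => c k * z ^ k) (p z))
    {r : ℝ} (hr0 : 0 < r) (hr1 : r < 1) (k : ℕ) (d : ℤ) (hkd : (k:ℤ) + d = 0) :
    (∫ θ in (0:ℝ)..(2*Real.pi), p ((r:ℂ) * Complex.exp (θ * Complex.I))
        * Complex.exp (d * θ * Complex.I)) = c k * (r:ℂ)^k * ((2*Real.pi : ℝ):ℂ) := by
  have H := circle_coeff c hsum hr0 hr1 d
  have hg : HasSum (fun m : ℕ => c m * (r:ℂ) ^ m *
      ∫ θ in (0:ℝ)..(2*Real.pi), Complex.exp ((((m:ℤ) + d) : ℤ) * θ * Complex.I))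
      (c k * (r:ℂ) ^ k *
      ∫ θ in (0:ℝ)..(2*Real.pi), Complex.exp ((((k:ℤ) + d) : ℤ) * θ * Complex.I)) :=
    hasSum_single k (fun m hm => by
      rw [integral_exp_int (fun h => hm (by omega)), mul_zero])
  rw [← hg.unique H, hkd, integral_exp_zero]
  push_cast
  ring

lemma circle_zero {p : ℂ → ℂ} (c : ℕ → ℂ)
    (hsum : ∀ z ∈ Metric.ball (0:ℂ) 1, HasSum (fun k => c k * z ^ k) (p z))
    {r : ℝ} (hr0 : 0 < r) (hr1 : r < 1) (d : ℤ) (hd : ∀ m : ℕ, (m:ℤ) + d ≠ 0) :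
    (∫ θ in (0:ℝ)..(2*Real.pi), p ((r:ℂ) * Complex.exp (θ * Complex.I))
        * Complex.exp (d * θ * Complex.I)) = 0 := by
  have H := circle_coeff c hsum hr0 hr1 d
  have hg : HasSum (fun m : ℕ => c m * (r:ℂ) ^ m *
      ∫ θ in (0:ℝ)..(2*Real.pi), Complex.exp ((((m:ℤ) + d) : ℤ) * θ * Complex.I)) 0 := by
    have he : (fun m : ℕ => c m * (r:ℂ) ^ m *
        ∫ θ in (0:ℝ)..(2*Real.pi), Complex.exp ((((m:ℤ) + d) : ℤ) * θ * Complex.I))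
        = fun _ => (0:ℂ) := funext fun m => by rw [integral_exp_int (hd m), mul_zero]
    rw [he]
    exact hasSum_zero
  exact (hg.unique H).symm

lemma cara_coeff {p : ℂ → ℂ} (hd : DifferentiableOn ℂ p (Metric.ball 0 1))
    (h0 : p 0 = 1) (hre : ∀ z ∈ Metric.ball (0:ℂ) 1, 0 < (p z).re) (c : ℕ → ℂ)
    (hsum : ∀ z ∈ Metric.ball (0:ℂ) 1, HasSum (fun k => c k * z ^ k) (p z)) :
    c 0 = 1 ∧ ∀ k, 1 ≤ k → ‖c k‖ ≤ 2 := by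
  have h2π : (0:ℝ) ≤ 2*Real.pi := by positivity
  have hπ : (0:ℝ) < Real.pi := Real.pi_pos
  have hc0 : c 0 = 1 := by
    have h00 := hsum 0 (by simp)
    have h1 : HasSum (fun k => c k * (0:ℂ)^k) (c 0 * (0:ℂ)^0) :=
      hasSum_single 0 (fun b hb => by simp [zero_pow hb])
    have := h1.unique h00
    simpa [h0] using this
  refine ⟨hc0, fun k hk => ?_⟩
  have key : ∀ r : ℝ, 0 < r → r < 1 → ‖c k‖ * r ^ k ≤ 2 := by
    intro r hr0 hr1
    have hw : ∀ θ : ℝ, (r:ℂ) * Complex.exp ((θ:ℂ) * Complex.I) ∈ Metric.ball (0:ℂ) 1 := by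
      intro θ
      simp only [Metric.mem_ball, dist_zero_right, norm_mul, Complex.norm_real,
        Real.norm_eq_abs, abs_of_pos hr0, norm_exp_real_mul_I, mul_one]
      exact hr1
    have hcontw : Continuous fun θ : ℝ => (r:ℂ) * Complex.exp ((θ:ℂ) * Complex.I) :=
      continuous_const.mul (Complex.continuous_ofReal.mul continuous_const).cexp
    have hcontp : Continuous fun θ : ℝ => p ((r:ℂ) * Complex.exp ((θ:ℂ) * Complex.I)) :=
      ContinuousOn.comp_continuous hd.continuousOn hcontw hw
    have hconte : Continuous fun θ : ℝ => Complex.exp (((-(k:ℤ) : ℤ):ℂ) * θ * Complex.I) :=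
      ((continuous_const.mul Complex.continuous_ofReal).mul continuous_const).cexp
    have hAval := circle_single c hsum hr0 hr1 k (-(k:ℤ)) (by ring)
    have hBval := circle_zero c hsum hr0 hr1 (k:ℤ) (fun m => by omega)
    have hI0 := circle_single c hsum hr0 hr1 0 0 (by ring)
    have hI0' : (∫ θ in (0:ℝ)..(2*Real.pi),
        p ((r:ℂ) * Complex.exp ((θ:ℂ) * Complex.I))) = ((2*Real.pi : ℝ):ℂ) := by
      have heq : (fun θ:ℝ => p ((r:ℂ) * Complex.exp ((θ:ℂ) * Complex.I))
          * Complex.exp (((0:ℤ):ℂ) * θ * Complex.I))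
          = fun θ:ℝ => p ((r:ℂ) * Complex.exp ((θ:ℂ) * Complex.I)) := by
        funext θ
        simp
      rw [heq] at hI0
      rw [hI0, hc0]
      simp
    have hintA : IntervalIntegrable
        (fun θ => p ((r:ℂ) * Complex.exp ((θ:ℂ) * Complex.I))
          * Complex.exp (((-(k:ℤ) : ℤ):ℂ) * θ * Complex.I)) volume 0 (2*Real.pi) :=
      (hcontp.mul hconte).intervalIntegrable _ _
    have hintCB : IntervalIntegrable
        (fun θ => (starRingEnd ℂ) (p ((r:ℂ) * Complex.exp ((θ:ℂ) * Complex.I)))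
          * Complex.exp (((-(k:ℤ) : ℤ):ℂ) * θ * Complex.I)) volume 0 (2*Real.pi) :=
      ((Complex.continuous_conj.comp hcontp).mul hconte).intervalIntegrable _ _
    have hCB : (∫ θ in (0:ℝ)..(2*Real.pi),
        (starRingEnd ℂ) (p ((r:ℂ) * Complex.exp ((θ:ℂ) * Complex.I)))
          * Complex.exp (((-(k:ℤ) : ℤ):ℂ) * θ * Complex.I)) = 0 := by
      have h1 : (∫ θ in (0:ℝ)..(2*Real.pi),
          (starRingEnd ℂ) (p ((r:ℂ) * Complex.exp ((θ:ℂ) * Complex.I)))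
            * Complex.exp (((-(k:ℤ) : ℤ):ℂ) * θ * Complex.I))
          = (starRingEnd ℂ) (∫ θ in (0:ℝ)..(2*Real.pi),
            p ((r:ℂ) * Complex.exp ((θ:ℂ) * Complex.I))
              * Complex.exp (((k:ℤ):ℂ) * θ * Complex.I)) := by
        rw [← intervalIntegral_conj]
        apply intervalIntegral.integral_congr
        intro θ _
        dsimp only
        rw [map_mul]
        congr 1
        rw [← Complex.exp_conj]
        congr 1
        simp only [map_mul, Complex.conj_ofReal, Complex.conj_I, map_intCast, map_natCast]
        push_cast
        ring
      rw [h1, hBval, map_zero]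
    have hT : (∫ θ in (0:ℝ)..(2*Real.pi),
        ((2 * (p ((r:ℂ) * Complex.exp ((θ:ℂ) * Complex.I))).re : ℝ) : ℂ)
          * Complex.exp (((-(k:ℤ) : ℤ):ℂ) * θ * Complex.I))
        = c k * (r:ℂ)^k * ((2*Real.pi : ℝ):ℂ) := by
      have hsplit : (∫ θ in (0:ℝ)..(2*Real.pi),
          ((2 * (p ((r:ℂ) * Complex.exp ((θ:ℂ) * Complex.I))).re : ℝ) : ℂ)
            * Complex.exp (((-(k:ℤ) : ℤ):ℂ) * θ * Complex.I))
          = (∫ θ in (0:ℝ)..(2*Real.pi),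
              p ((r:ℂ) * Complex.exp ((θ:ℂ) * Complex.I))
                * Complex.exp (((-(k:ℤ) : ℤ):ℂ) * θ * Complex.I))
            + ∫ θ in (0:ℝ)..(2*Real.pi),
              (starRingEnd ℂ) (p ((r:ℂ) * Complex.exp ((θ:ℂ) * Complex.I)))
                * Complex.exp (((-(k:ℤ) : ℤ):ℂ) * θ * Complex.I) := by
        rw [← intervalIntegral.integral_add hintA hintCB]
        apply intervalIntegral.integral_congr
        intro θ _
        dsimp only
        rw [← add_mul, Complex.add_conj]
      rw [hsplit, hCB, add_zero, hAval]
    have hnb : ‖c k * (r:ℂ)^k * ((2*Real.pi : ℝ):ℂ)‖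
        ≤ ∫ θ in (0:ℝ)..(2*Real.pi),
            2 * (p ((r:ℂ) * Complex.exp ((θ:ℂ) * Complex.I))).re := by
      rw [← hT]
      refine le_trans (intervalIntegral.norm_integral_le_integral_norm h2π) ?_
      apply le_of_eq
      apply intervalIntegral.integral_congr
      intro θ _
      dsimp only
      have hrepos : 0 < (p ((r:ℂ) * Complex.exp ((θ:ℂ) * Complex.I))).re := hre _ (hw θ)
      rw [norm_mul]
      have he1 : ‖Complex.exp (((-(k:ℤ) : ℤ):ℂ) * θ * Complex.I)‖ = 1 := by
        have : (((-(k:ℤ) : ℤ):ℂ) * θ * Complex.I) = (((-(k:ℤ) * θ : ℝ)):ℂ) * Complex.I := by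
          push_cast; ring
        rw [this, norm_exp_real_mul_I]
      rw [he1, mul_one, Complex.norm_real, Real.norm_eq_abs, _root_.abs_of_nonneg (by linarith)]
    have hre2 : (∫ θ in (0:ℝ)..(2*Real.pi),
        2 * (p ((r:ℂ) * Complex.exp ((θ:ℂ) * Complex.I))).re) = 4 * Real.pi := by
      rw [intervalIntegral.integral_const_mul,
        intervalIntegral_re h2π (hcontp.intervalIntegrable _ _), hI0']
      simp
      ring
    rw [hre2] at hnb
    have hAnorm : ‖c k * (r:ℂ)^k * ((2*Real.pi : ℝ):ℂ)‖ = ‖c k‖ * r ^ k * (2*Real.pi) := by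
      rw [norm_mul, norm_mul, norm_pow, Complex.norm_real, Complex.norm_real,
        Real.norm_eq_abs, Real.norm_eq_abs, _root_.abs_of_pos hr0, _root_.abs_of_nonneg h2π]
    rw [hAnorm] at hnb
    nlinarith [hπ]
  have htend : Filter.Tendsto (fun r : ℝ => ‖c k‖ * r ^ k) (nhdsWithin 1 (Set.Iio 1))
      (nhds (‖c k‖ * 1 ^ k)) :=
    ((continuous_const.mul (continuous_pow k)).tendsto 1).mono_left nhdsWithin_le_nhds
  have hev : ∀ᶠ r in nhdsWithin (1:ℝ) (Set.Iio 1), ‖c k‖ * r ^ k ≤ 2 := by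
    filter_upwards [Ioo_mem_nhdsLT_of_mem (by norm_num : (1:ℝ) ∈ Set.Ioc (0:ℝ) 1)] with r hr
    exact key r hr.1 hr.2
  have := le_of_tendsto htend hev
  simpa using this

lemma sigmaIter_hasSum (σ : ℝ) (m : ℕ) (hm : (m:ℝ) - 1 < σ) (p : ℂ → ℂ) (c : ℕ → ℂ)
    (h : ∀ z ∈ Metric.ball (0:ℂ) 1, HasSum (fun k => c k * z ^ k) (p z)) :
    ∀ z ∈ Metric.ball (0:ℂ) 1,
      HasSum (fun k => ((multc σ m k : ℝ) : ℂ) * c k * z ^ k) (sigmaIter σ m p z) := by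
  induction m with
  | zero =>
    intro z hz
    have := h z hz
    simpa [multc, sigmaIter] using this
  | succ m ih =>
    have hm' : (m:ℝ) - 1 < σ := by push_cast at hm ⊢; linarith
    have ihm := ih hm'
    intro z hz
    have hz1 : ‖z‖ < 1 := by simpa [Metric.mem_ball, dist_zero_right] using hz
    set e : ℝ := σ - ((m:ℝ) + 1) with he_def
    have he : (-1:ℝ) < e := by push_cast at hm; simp only [he_def]; linarith
    set b : ℕ → ℂ := fun k => ((multc σ m k : ℝ) : ℂ) * c k with hb_def
    -- summability of ‖b k‖ * r'^k at r' = (1+‖z‖)/2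
    set r' : ℝ := (1 + ‖z‖) / 2 with hr'_def
    have hr'0 : 0 < r' := by positivity
    have hzr' : ‖z‖ < r' := by
      simp only [hr'_def]; linarith
    have hr'1 : r' < 1 := by
      simp only [hr'_def]; linarith
    have hr'ball : ((r':ℝ):ℂ) ∈ Metric.ball (0:ℂ) 1 := by
      simp only [Metric.mem_ball, dist_zero_right, Complex.norm_real, Real.norm_eq_abs,
        _root_.abs_of_pos hr'0]
      exact hr'1
    have S : Summable fun k => ‖b k‖ * r' ^ k := by
      have h1 := summable_norm_iff.mpr (ihm ((r':ℝ):ℂ) hr'ball).summable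
      simpa [hb_def, norm_mul, norm_pow, Complex.norm_real,
        Real.norm_eq_abs, _root_.abs_of_pos hr'0] using h1
    set μ := volume.restrict (Set.Ioc (0:ℝ) 1) with hμ
    set F : ℕ → ℝ → ℂ := fun k s => ((s ^ e : ℝ) : ℂ) * (b k * (((s:ℝ):ℂ) * z) ^ k)
      with hF_def
    -- integrability of each F k
    have hrpow_int : ∀ k : ℕ, Integrable (fun s : ℝ => ((s ^ (e + k) : ℝ) : ℂ)) μ := by
      intro k
      have h1 : IntervalIntegrable (fun s : ℝ => s ^ (e + k)) volume 0 1 :=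
        intervalIntegral.intervalIntegrable_rpow' (by linarith [Nat.cast_nonneg (α := ℝ) k])
      exact (h1.1).ofReal
    have hFeq : ∀ k : ℕ, ∀ s ∈ Set.Ioc (0:ℝ) 1,
        F k s = (b k * z ^ k) * ((s ^ (e + k) : ℝ) : ℂ) := by
      intro k s hs
      simp only [hF_def]
      rw [Real.rpow_add hs.1, Real.rpow_natCast]
      push_cast
      ring
    have hInt : ∀ k, Integrable (F k) μ := by
      intro k
      apply (((hrpow_int k).const_mul (b k * z ^ k)).congr ?_)
      have hae : ∀ᵐ s ∂μ, s ∈ Set.Ioc (0:ℝ) 1 := by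
        rw [hμ]
        exact MeasureTheory.ae_restrict_mem measurableSet_Ioc
      filter_upwards [hae] with s hs
      exact (hFeq k s hs).symm
    -- value of ∫ s^(e+k)
    have hval : ∀ k : ℕ, (∫ s in Set.Ioc (0:ℝ) 1, s ^ (e + k)) = (e + k + 1)⁻¹ := by
      intro k
      have hek : (-1:ℝ) < e + k := by linarith [Nat.cast_nonneg (α := ℝ) k]
      rw [← intervalIntegral.integral_of_le (by norm_num : (0:ℝ) ≤ 1),
        integral_rpow (Or.inl hek)]
      rw [Real.one_rpow, Real.zero_rpow (by linarith)]
      simp [one_div]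
    -- summability of integral norms
    have hIntNorm : Summable fun k => ∫ s, ‖F k s‖ ∂μ := by
      apply Summable.of_nonneg_of_le (fun k => integral_nonneg fun s => norm_nonneg _)
        (fun k => ?_) (S.mul_right (e+1)⁻¹)
      have hb1 : ∀ s ∈ Set.Ioc (0:ℝ) 1, ‖F k s‖ ≤ (‖b k‖ * r' ^ k) * s ^ e := by
        intro s hs
        rw [hFeq k s hs, Real.rpow_add hs.1, Real.rpow_natCast]
        have h3 : (0:ℝ) ≤ s ^ e := Real.rpow_nonneg hs.1.le e
        have h4 : (0:ℝ) ≤ s ^ k := pow_nonneg hs.1.le k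
        rw [norm_mul, norm_mul, norm_pow, Complex.norm_real, Real.norm_eq_abs,
          _root_.abs_of_nonneg (mul_nonneg h3 h4)]
        have h1 : ‖z‖ ^ k ≤ r' ^ k := pow_le_pow_left₀ (norm_nonneg z) hzr'.le k
        have h2 : s ^ k ≤ 1 := pow_le_one₀ hs.1.le hs.2
        have h5 : ‖b k‖ * ‖z‖^k ≤ ‖b k‖ * r'^k :=
          mul_le_mul_of_nonneg_left h1 (norm_nonneg _)
        have h6 : s^e * s^k ≤ s^e * 1 := mul_le_mul_of_nonneg_left h2 h3
        calc ‖b k‖ * ‖z‖^k * (s^e * s^k) ≤ ‖b k‖ * r'^k * (s^e * 1) := by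
              apply mul_le_mul h5 h6 (mul_nonneg h3 h4) (by positivity)
          _ = ‖b k‖ * r'^k * s^e := by ring
      have hint1 : IntegrableOn (fun s : ℝ => s ^ e) (Set.Ioc (0:ℝ) 1) volume :=
        (intervalIntegral.intervalIntegrable_rpow' he).1
      calc (∫ s, ‖F k s‖ ∂μ) ≤ ∫ s in Set.Ioc (0:ℝ) 1, (‖b k‖ * r' ^ k) * s ^ e := by
            rw [hμ]
            apply MeasureTheory.setIntegral_mono_on ((hInt k).norm) (hint1.const_mul _)
              measurableSet_Ioc
            exact hb1
        _ = (‖b k‖ * r' ^ k) * ∫ s in Set.Ioc (0:ℝ) 1, s ^ e := by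
            rw [MeasureTheory.integral_const_mul]
        _ ≤ ‖b k‖ * r' ^ k * (e + 1)⁻¹ := by
            have := hval 0
            simp only [Nat.cast_zero, add_zero] at this
            rw [this]

    have H := hasSum_integral_of_summable_integral_norm hInt hIntNorm
    -- identify the total integral
    have htot : (∫ s, (∑' k, F k s) ∂μ)
        = ∫ s in (0:ℝ)..1, ((s ^ e : ℝ) : ℂ) * sigmaIter σ m p ((s:ℂ) * z) := by
      rw [intervalIntegral.integral_of_le (by norm_num : (0:ℝ) ≤ 1), hμ]
      apply MeasureTheory.setIntegral_congr_fun measurableSet_Ioc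
      intro s hs
      dsimp only
      have hsz : ((s:ℝ):ℂ) * z ∈ Metric.ball (0:ℂ) 1 := by
        simp only [Metric.mem_ball, dist_zero_right, norm_mul, Complex.norm_real,
          Real.norm_eq_abs, _root_.abs_of_pos hs.1]
        calc s * ‖z‖ ≤ 1 * ‖z‖ := by
              apply mul_le_mul_of_nonneg_right hs.2 (norm_nonneg z)
          _ < 1 := by rw [one_mul]; exact hz1
      have hq := ihm _ hsz
      rw [← hq.tsum_eq, ← tsum_mul_left]
    have hterm : ∀ k : ℕ, (∫ s, F k s ∂μ)
        = (b k * z ^ k) * (((e + k + 1)⁻¹ : ℝ) : ℂ) := by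
      intro k
      have h1 : (∫ s, F k s ∂μ) = ∫ s in Set.Ioc (0:ℝ) 1, (b k * z ^ k) * ((s ^ (e + k) : ℝ) : ℂ) := by
        rw [hμ]
        exact MeasureTheory.setIntegral_congr_fun measurableSet_Ioc (hFeq k)
      rw [h1, MeasureTheory.integral_const_mul]
      congr 1
      have hint2 : Integrable (fun a : ℝ => a ^ (e + (k:ℝ)))
          (volume.restrict (Set.Ioc (0:ℝ) 1)) :=
        (intervalIntegral.intervalIntegrable_rpow'
          (by linarith [Nat.cast_nonneg (α := ℝ) k])).1
      exact (ContinuousLinearMap.integral_comp_comm Complex.ofRealCLM hint2).trans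
        (by rw [hval k]; simp [Complex.ofRealCLM_apply])
    -- final assembly
    have H2 := H.mul_left ((σ:ℂ) - (m:ℂ))
    have hfun : ∀ k : ℕ, ((σ:ℂ) - (m:ℂ)) * (∫ s, F k s ∂μ)
        = ((multc σ (m+1) k : ℝ) : ℂ) * c k * z ^ k := by
      intro k
      rw [hterm k]
      have hmul : multc σ (m+1) k = multc σ m k * ((σ - m) / (σ - m + k)) := by
        rw [multc, multc, Finset.prod_range_succ]
      rw [hmul]
      have hden : e + k + 1 = σ - m + k := by simp only [he_def]; ring
      rw [hden]
      simp only [hb_def]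
      push_cast
      ring
    have hgoal : sigmaIter σ (m+1) p z
        = ((σ:ℂ) - (m:ℂ)) * ∫ s, (∑' k, F k s) ∂μ := by
      show ((σ - (m : ℝ)) : ℂ) * _ = _
      rw [htot]
      simp only [he_def]
      norm_cast
    rw [hgoal]
    have H3 : HasSum (fun k => ((multc σ (m+1) k : ℝ) : ℂ) * c k * z ^ k)
        (((σ:ℂ) - (m:ℂ)) * ∫ s, (∑' k, F k s) ∂μ) := by
      have := H2
      simp only [hfun] at this
      exact this
    exact H3

lemma coeff_unique {g : ℂ → ℂ} {a d : ℕ → ℂ}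
    (ha : ∀ z ∈ Metric.ball (0:ℂ) 1, HasSum (fun k => a k * z ^ k) (g z))
    (hd : ∀ z ∈ Metric.ball (0:ℂ) 1, HasSum (fun k => d k * z ^ k) (g z)) : a = d := by
  have key : ∀ e : ℕ → ℂ, (∀ z ∈ Metric.ball (0:ℂ) 1, HasSum (fun k => e k * z ^ k) (g z)) →
      HasFPowerSeriesOnBall g (FormalMultilinearSeries.ofScalars ℂ e) 0 1 := by
    intro e he
    refine ⟨?_, one_pos, ?_⟩
    · apply ENNReal.le_of_forall_nnreal_lt
      intro ρ hρ
      have hρ1 : (ρ:ℝ) < 1 := by exact_mod_cast hρ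
      have hρball : ((ρ:ℝ):ℂ) ∈ Metric.ball (0:ℂ) 1 := by
        simp only [Metric.mem_ball, dist_zero_right, Complex.norm_real, Real.norm_eq_abs,
          NNReal.abs_eq]
        exact hρ1
      apply FormalMultilinearSeries.le_radius_of_summable
      have h1 := summable_norm_iff.mpr (he _ hρball).summable
      have h2 : (fun k => ‖FormalMultilinearSeries.ofScalars ℂ e k‖ * (ρ:ℝ) ^ k)
          = fun k => ‖e k * ((ρ:ℝ):ℂ) ^ k‖ := by
        funext k
        rw [FormalMultilinearSeries.ofScalars_norm, norm_mul, norm_pow, Complex.norm_real,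
          Real.norm_eq_abs, NNReal.abs_eq]
      rw [h2]
      exact h1
    · intro y hy
      have hy1 : y ∈ Metric.ball (0:ℂ) 1 := by
        have hy' : edist y 0 < 1 := by simpa [EMetric.mem_ball] using hy
        rw [edist_dist] at hy'
        exact Metric.mem_ball.mpr (ENNReal.ofReal_lt_one.mp hy')
      have := he y hy1
      simp only [FormalMultilinearSeries.ofScalars_apply_eq, smul_eq_mul, zero_add]
      exact this
  have h1 := ((key a ha).hasFPowerSeriesAt).eq_formalMultilinearSeries
    ((key d hd).hasFPowerSeriesAt)
  exact (FormalMultilinearSeries.ofScalars_series_injective ℂ ℂ) h1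

/-- The shifted coefficient sequence of `z (β + (1-β) q(z))`. -/
noncomputable def dser (σ : ℝ) (n : ℕ) (β : ℝ) (c : ℕ → ℂ) : ℕ → ℂ :=
  fun k => Nat.casesOn k 0 fun j =>
    (if j = 0 then (β:ℂ) else 0) + (1 - (β:ℂ)) * ((multc σ n j : ℝ) : ℂ) * c j

lemma dser_zero (σ : ℝ) (n : ℕ) (β : ℝ) (c : ℕ → ℂ) : dser σ n β c 0 = 0 := rfl

lemma dser_succ (σ : ℝ) (n : ℕ) (β : ℝ) (c : ℕ → ℂ) (j : ℕ) :
    dser σ n β c (j+1)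
      = (if j = 0 then (β:ℂ) else 0) + (1 - (β:ℂ)) * ((multc σ n j : ℝ) : ℂ) * c j := rfl

lemma seriesB (σ : ℝ) (n : ℕ) (hσ : (n:ℝ) - 1 < σ) (β : ℝ) (p : ℂ → ℂ) (c : ℕ → ℂ)
    (hc : ∀ z ∈ Metric.ball (0:ℂ) 1, HasSum (fun k => c k * z ^ k) (p z)) :
    ∀ z ∈ Metric.ball (0:ℂ) 1, HasSum (fun k => dser σ n β c k * z ^ k)
      (z * ((β : ℂ) + ((1 : ℂ) - β) * sigmaIter σ n p z)) := by
  intro z hz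
  have hq := sigmaIter_hasSum σ n hσ p c hc z hz
  have h1 := hq.mul_left (((1:ℂ) - β) * z)
  have h1' : HasSum (fun j => ((1 - (β:ℂ)) * ((multc σ n j : ℝ) : ℂ) * c j) * z ^ (j+1))
      (((1:ℂ) - β) * z * sigmaIter σ n p z) := by
    refine h1.congr_fun fun j => ?_
    ring
  have h2 : HasSum (fun j : ℕ => (if j = 0 then (β:ℂ) else 0) * z ^ (j+1)) ((β:ℂ) * z) := by
    have h3 := hasSum_single (f := fun j : ℕ => (if j = 0 then (β:ℂ) else 0) * z ^ (j+1)) 0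
      (fun b hb => by simp [hb])
    simpa using h3
  have h3 := h2.add h1'
  have h4 : HasSum (fun j : ℕ => dser σ n β c (j+1) * z ^ (j+1))
      ((β:ℂ) * z + ((1:ℂ) - β) * z * sigmaIter σ n p z) := by
    refine h3.congr_fun fun j => ?_
    rw [dser_succ]
    ring
  apply (hasSum_nat_add_iff' (f := fun k => dser σ n β c k * z ^ k) 1).mp
  have h6 : z * ((β : ℂ) + ((1 : ℂ) - β) * sigmaIter σ n p z)
      - ∑ i ∈ Finset.range 1, dser σ n β c i * z ^ i
      = (β:ℂ) * z + ((1:ℂ) - β) * z * sigmaIter σ n p z := by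
    simp only [Finset.sum_range_one, dser_zero]
    ring
  rw [h6]
  exact h4

lemma one_sub_ne {z : ℂ} (hz : z ∈ Metric.ball (0:ℂ) 1) : (1:ℂ) - z ≠ 0 := by
  intro h
  have h1 : z = 1 := by linear_combination -h
  rw [h1] at hz
  simp at hz

lemma cara_ext : IsCara (fun z => (1+z)/((1:ℂ)-z)) := by
  refine ⟨?_, by simp, ?_⟩
  · apply DifferentiableOn.div
    · exact ((differentiable_const _).add differentiable_id).differentiableOn
    · exact ((differentiable_const _).sub differentiable_id).differentiableOn
    · exact fun z hz => one_sub_ne hz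
  · intro z hz
    have hz1 : Complex.normSq z < 1 := by
      have h1 : ‖z‖ < 1 := by simpa [Metric.mem_ball, dist_zero_right] using hz
      have h2 : ‖z‖^2 < 1 := by nlinarith [norm_nonneg z]
      rwa [Complex.sq_norm] at h2
    have hne := one_sub_ne hz
    have hpos : 0 < Complex.normSq (1 - z) := Complex.normSq_pos.mpr hne
    have hnum : ((1:ℂ)+z).re * ((1:ℂ)-z).re + ((1:ℂ)+z).im * ((1:ℂ)-z).im
        = 1 - Complex.normSq z := by
      simp only [Complex.add_re, Complex.sub_re, Complex.add_im, Complex.sub_im,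
        Complex.one_re, Complex.one_im, Complex.normSq_apply]
      ring
    show 0 < (((1:ℂ)+z) / ((1:ℂ)-z)).re
    rw [Complex.div_re, ← add_div, hnum]
    exact div_pos (by linarith) hpos
  
lemma hasSum_ext : ∀ z ∈ Metric.ball (0:ℂ) 1,
    HasSum (fun k : ℕ => (if k = 0 then (1:ℂ) else 2) * z ^ k) ((1+z)/((1:ℂ)-z)) := by
  intro z hz
  have hz1 : ‖z‖ < 1 := by simpa [Metric.mem_ball, dist_zero_right] using hz
  have hne := one_sub_ne hz
  have hgeo := hasSum_geometric_of_norm_lt_one hz1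
  have h1 := hgeo.mul_left (2*z)
  apply (hasSum_nat_add_iff'
    (f := fun k : ℕ => (if k = 0 then (1:ℂ) else 2) * z ^ k) 1).mp
  have h2 : (1+z)/((1:ℂ)-z) - ∑ i ∈ Finset.range 1, (if i = 0 then (1:ℂ) else 2) * z ^ i
      = 2*z * ((1:ℂ)-z)⁻¹ := by
    simp only [Finset.sum_range_one, pow_zero, if_pos, mul_one]
    field_simp
    ring
  rw [h2]
  refine h1.congr_fun fun j => ?_
  simp only [Nat.succ_ne_zero, if_false]
  ring

/-- Sharp coefficient bounds in `B_n^σ(β)`: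
`|a_k| ≤ 2(1-β)[σ]_{n/(k-1)}` for `k ≥ 2`. -/
theorem stmt11 (σ : ℝ) (n : ℕ) (hσ : 0 < σ - ((n : ℝ) - 1))
    (β : ℝ) (hβ0 : 0 ≤ β) (hβ1 : β < 1) :
    (∀ (f : ℂ → ℂ) (a : ℕ → ℂ), MemB σ n β f → a 0 = 0 → a 1 = 1 →
      (∀ z ∈ Metric.ball (0 : ℂ) 1, HasSum (fun k : ℕ => a k * z ^ k) (f z)) →
      ∀ k : ℕ, 2 ≤ k → ‖a k‖ ≤ 2 * (1 - β) * poch σ n (k - 1)) ∧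
    ∃ (f : ℂ → ℂ) (a : ℕ → ℂ), MemB σ n β f ∧ a 0 = 0 ∧ a 1 = 1 ∧
      (∀ z ∈ Metric.ball (0 : ℂ) 1, HasSum (fun k : ℕ => a k * z ^ k) (f z)) ∧
      ∀ k : ℕ, 2 ≤ k → ‖a k‖ = 2 * (1 - β) * poch σ n (k - 1) := by
  have hσ' : (n:ℝ) - 1 < σ := by linarith
  have hβ' : (0:ℝ) < 1 - β := by linarith
  constructor
  · rintro f a ⟨p, ⟨hpd, hp0, hpre⟩, hrep⟩ ha0 ha1 hsum k hk
    obtain ⟨c, hc⟩ := exists_hasSum_of_differentiableOn hpd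
    obtain ⟨hc0, hcb⟩ := cara_coeff hpd hp0 hpre c hc
    have hdser : ∀ z ∈ Metric.ball (0:ℂ) 1,
        HasSum (fun j => dser σ n β c j * z ^ j) (f z) := by
      intro z hz
      rw [hrep z hz]
      exact seriesB σ n hσ' β p c hc z hz
    have had : a = dser σ n β c := coeff_unique hsum hdser
    obtain ⟨j, rfl⟩ : ∃ j, k = j + 1 := ⟨k - 1, by omega⟩
    have hj : j ≠ 0 := by omega
    have hj1 : 1 ≤ j := by omega
    rw [had, dser_succ, if_neg hj, zero_add]
    have hmn : 0 ≤ multc σ n j := (multc_pos σ n hσ' j).le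
    have hnorm : ‖(1 - (β:ℂ)) * ((multc σ n j : ℝ) : ℂ) * c j‖
        = (1 - β) * multc σ n j * ‖c j‖ := by
      rw [norm_mul, norm_mul]
      have h1 : ((1:ℂ) - β) = ((1 - β : ℝ) : ℂ) := by push_cast; ring
      rw [h1, Complex.norm_real, Complex.norm_real, Real.norm_eq_abs, Real.norm_eq_abs,
        _root_.abs_of_pos hβ', _root_.abs_of_nonneg hmn]
    rw [hnorm]
    have hcbj := hcb j hj1
    have hpoch : poch σ n (j + 1 - 1) = multc σ n j := by
      simp only [Nat.add_sub_cancel]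
      exact poch_eq_multc σ n j
    rw [hpoch]
    nlinarith [mul_le_mul_of_nonneg_left hcbj (mul_nonneg hβ'.le hmn)]
  · set c₀ : ℕ → ℂ := fun k => if k = 0 then (1:ℂ) else 2 with hc₀
    set p₀ : ℂ → ℂ := fun z => (1+z)/((1:ℂ)-z) with hp₀
    refine ⟨fun z => z * ((β : ℂ) + ((1 : ℂ) - β) * sigmaIter σ n p₀ z),
      dser σ n β c₀, ⟨p₀, cara_ext, fun z _ => rfl⟩, dser_zero σ n β c₀, ?_, ?_, ?_⟩
    · rw [show (1:ℕ) = 0 + 1 from rfl, dser_succ, if_pos rfl, multc_zero σ n hσ']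
      simp [hc₀]
    · intro z hz
      exact seriesB σ n hσ' β p₀ c₀ (fun w hw => hasSum_ext w hw) z hz
    · intro k hk
      obtain ⟨j, rfl⟩ : ∃ j, k = j + 1 := ⟨k - 1, by omega⟩
      have hj : j ≠ 0 := by omega
      rw [dser_succ, if_neg hj, zero_add]
      have hmn : 0 ≤ multc σ n j := (multc_pos σ n hσ' j).le
      have hcj : c₀ j = 2 := by simp [hc₀, hj]
      rw [hcj]
      have h1 : ((1:ℂ) - β) = ((1 - β : ℝ) : ℂ) := by push_cast; ring
      rw [norm_mul, norm_mul, h1, Complex.norm_real, Complex.norm_real,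
        Real.norm_eq_abs, Real.norm_eq_abs, _root_.abs_of_pos hβ',
        _root_.abs_of_nonneg hmn]
      have hpoch : poch σ n (j + 1 - 1) = multc σ n j := by
        simp only [Nat.add_sub_cancel]
        exact poch_eq_multc σ n j
      rw [hpoch]
      have h2 : ‖(2:ℂ)‖ = 2 := by norm_num
      rw [h2]
      ring
end

section
/- The inclusion B_{n+1}^σ(β) ⊂ B_n^σ(β) holds for every n ∈ ℕ and fixed real σ with σ-n > 0 (so that both classes are defined), where membership f ∈ B_m^σ(β) is characterized by (f(z)/z − β)/(1−β) ∈ P_m^σ. -/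
open Complex MeasureTheory Metric Set

/-! ### Auxiliary material -/

/-- The basic averaging operator. -/
noncomputable def Jop (μ : ℝ) (p : ℂ → ℂ) : ℂ → ℂ := fun z =>
  ((μ : ℝ) : ℂ) * ∫ s in (0 : ℝ)..1, ((s ^ (μ - 1) : ℝ) : ℂ) * p ((s : ℂ) * z)

lemma sigmaIter_succ (σ : ℝ) (n : ℕ) (p : ℂ → ℂ) :
    sigmaIter σ (n + 1) p = Jop (σ - (n : ℝ)) (sigmaIter σ n p) := by
  funext z
  simp only [sigmaIter, Jop, sub_sub]
  norm_cast

lemma norm_coe_smul_le {z : ℂ} {s : ℝ} (hs0 : 0 ≤ s) (hs1 : s ≤ 1) : ‖(s : ℂ) * z‖ ≤ ‖z‖ := by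
  rw [norm_mul, Complex.norm_real, Real.norm_eq_abs, _root_.abs_of_nonneg hs0]
  nlinarith [norm_nonneg z]

lemma smul_mem_ball {z : ℂ} (hz : ‖z‖ < 1) {s : ℝ} (hs0 : 0 ≤ s) (hs1 : s ≤ 1) :
    (s : ℂ) * z ∈ ball (0 : ℂ) 1 := by
  rw [mem_ball_zero_iff]
  exact lt_of_le_of_lt (norm_coe_smul_le hs0 hs1) hz

lemma exists_bound {g : ℂ → ℂ} (hg : ContinuousOn g (ball 0 1)) {r : ℝ} (hr : r < 1) :
    ∃ C : ℝ, 0 ≤ C ∧ ∀ w : ℂ, ‖w‖ ≤ r → ‖g w‖ ≤ C := by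
  have hsub : closedBall (0 : ℂ) r ⊆ ball 0 1 := fun w hw => by
    rw [mem_closedBall_zero_iff] at hw; rw [mem_ball_zero_iff]; linarith
  obtain ⟨C, hC⟩ := (isCompact_closedBall (0 : ℂ) r).exists_bound_of_continuousOn (hg.mono hsub)
  exact ⟨max C 0, le_max_right _ _, fun w hw =>
    le_trans (hC w (mem_closedBall_zero_iff.2 hw)) (le_max_left _ _)⟩

lemma contOn_rpow (e : ℝ) : ContinuousOn (fun s : ℝ => s ^ e) (Ioc 0 1) :=
  fun s hs => (Real.continuousAt_rpow_const s e (Or.inl (ne_of_gt hs.1))).continuousWithinAt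

lemma contOn_comp {g : ℂ → ℂ} (hg : ContinuousOn g (ball 0 1)) {z : ℂ} (hz : ‖z‖ < 1) :
    ContinuousOn (fun s : ℝ => g ((s : ℂ) * z)) (Ioc 0 1) :=
  hg.comp ((Complex.continuous_ofReal.mul continuous_const).continuousOn)
    (fun s hs => smul_mem_ball hz hs.1.le hs.2)

lemma contOn_aux {g : ℂ → ℂ} (hg : ContinuousOn g (ball 0 1)) {z : ℂ} (hz : ‖z‖ < 1) (e : ℝ) :
    ContinuousOn (fun s : ℝ => ((s ^ e : ℝ) : ℂ) * g ((s : ℂ) * z)) (Ioc 0 1) :=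
  (Complex.continuous_ofReal.comp_continuousOn (contOn_rpow e)).mul (contOn_comp hg hz)

lemma II_of_bound {E : Type*} [NormedAddCommGroup E] {f : ℝ → E} {ν C : ℝ} (hν : 0 < ν)
    (hm : ContinuousOn f (Ioc 0 1))
    (hb : ∀ s ∈ Ioc (0 : ℝ) 1, ‖f s‖ ≤ C * s ^ (ν - 1)) :
    IntervalIntegrable f volume 0 1 := by
  have hg : IntervalIntegrable (fun s : ℝ => C * s ^ (ν - 1)) volume 0 1 :=
    (intervalIntegral.intervalIntegrable_rpow' (by linarith)).const_mul C
  rw [intervalIntegrable_iff_integrableOn_Ioc_of_le zero_le_one] at hg ⊢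
  exact Integrable.mono' hg (hm.aestronglyMeasurable measurableSet_Ioc)
    ((ae_restrict_iff' measurableSet_Ioc).2 (Filter.Eventually.of_forall hb))

lemma II_main {g : ℂ → ℂ} (hg : ContinuousOn g (ball 0 1)) {z : ℂ} (hz : ‖z‖ < 1)
    {μ C : ℝ} (hμ : 0 < μ) (hC : ∀ w : ℂ, ‖w‖ ≤ ‖z‖ → ‖g w‖ ≤ C) :
    IntervalIntegrable (fun s : ℝ => ((s ^ (μ - 1) : ℝ) : ℂ) * g ((s : ℂ) * z)) volume 0 1 := by
  apply II_of_bound hμ (contOn_aux hg hz (μ - 1))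
  intro s hs
  rw [norm_mul, Complex.norm_real, Real.norm_eq_abs,
    abs_of_pos (Real.rpow_pos_of_pos hs.1 _), mul_comm]
  exact mul_le_mul_of_nonneg_right (hC _ (norm_coe_smul_le hs.1.le hs.2))
    (Real.rpow_pos_of_pos hs.1 _).le

lemma Jop_apply_zero {μ : ℝ} (hμ : 0 < μ) {p : ℂ → ℂ} (hp1 : p 0 = 1) : Jop μ p 0 = 1 := by
  unfold Jop
  have h1 : ∀ s ∈ uIcc (0 : ℝ) 1, ((s ^ (μ - 1) : ℝ) : ℂ) * p ((s : ℂ) * 0)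
      = ((s ^ (μ - 1) : ℝ) : ℂ) := by
    intro s _; rw [mul_zero, hp1, mul_one]
  rw [intervalIntegral.integral_congr h1, intervalIntegral.integral_ofReal,
    integral_rpow (Or.inl (by linarith))]
  have hne : μ ≠ 0 := ne_of_gt hμ
  rw [show μ - 1 + 1 = μ by ring, Real.zero_rpow hne, Real.one_rpow]
  push_cast
  field_simp
  rw [sub_zero, mul_one]
  exact div_self (Complex.ofReal_ne_zero.2 hne)

lemma Jop_re_pos {μ : ℝ} (hμ : 0 < μ) {p : ℂ → ℂ} (hp : IsCara p) {z : ℂ}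
    (hz : z ∈ ball (0 : ℂ) 1) : 0 < (Jop μ p z).re := by
  rw [mem_ball_zero_iff] at hz
  obtain ⟨C, hC0, hC⟩ := exists_bound hp.1.continuousOn hz
  have hFc : IntervalIntegrable (fun s : ℝ => ((s ^ (μ - 1) : ℝ) : ℂ) * p ((s : ℂ) * z))
      volume 0 1 := II_main hp.1.continuousOn hz hμ hC
  have hre : (Jop μ p z).re = μ * ∫ s in (0:ℝ)..1, s ^ (μ - 1) * (p ((s : ℂ) * z)).re := by
    unfold Jop
    rw [Complex.re_ofReal_mul]
    congr 1
    rw [← Complex.reCLM_apply, ← Complex.reCLM.intervalIntegral_comp_comm hFc]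
    apply intervalIntegral.integral_congr
    intro s _
    simp [Complex.reCLM_apply, Complex.re_ofReal_mul]
  rw [hre]
  apply mul_pos hμ
  apply intervalIntegral.intervalIntegral_pos_of_pos_on ?_ ?_ zero_lt_one
  · apply II_of_bound hμ ((contOn_rpow (μ - 1)).mul
      (Complex.continuous_re.comp_continuousOn (contOn_comp hp.1.continuousOn hz)))
    intro s hs
    have h2 : |(p ((s : ℂ) * z)).re| ≤ C := by
      refine le_trans ?_ (hC _ (norm_coe_smul_le hs.1.le hs.2))
      exact Complex.abs_re_le_norm _
    simp only [Pi.mul_apply, Function.comp_apply]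
    rw [Real.norm_eq_abs, abs_mul, abs_of_pos (Real.rpow_pos_of_pos hs.1 _), mul_comm]
    exact mul_le_mul_of_nonneg_right h2 (Real.rpow_pos_of_pos hs.1 _).le
  · intro x hx
    exact mul_pos (Real.rpow_pos_of_pos hx.1 _)
      (hp.2.2 _ (smul_mem_ball hz hx.1.le hx.2.le))

lemma Jop_diff {μ : ℝ} (hμ : 0 < μ) {p : ℂ → ℂ} (hp : DifferentiableOn ℂ p (ball 0 1)) :
    DifferentiableOn ℂ (Jop μ p) (ball 0 1) := by
  have hpc := hp.continuousOn
  have hpa : AnalyticOnNhd ℂ p (ball 0 1) := hp.analyticOnNhd isOpen_ball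
  have hdc : ContinuousOn (deriv p) (ball 0 1) :=
    (hpa.deriv.differentiableOn).continuousOn
  intro z₀ hz₀'
  have hz₀ : ‖z₀‖ < 1 := mem_ball_zero_iff.1 hz₀'
  set r : ℝ := (1 + ‖z₀‖) / 2 with hr
  have hr1 : r < 1 := by rw [hr]; linarith
  have hz₀r : ‖z₀‖ < r := by rw [hr]; linarith
  obtain ⟨C, hC0, hC⟩ := exists_bound hpc hr1
  obtain ⟨C', hC'0, hC'⟩ := exists_bound hdc hr1
  have hε0 : (0 : ℝ) < r - ‖z₀‖ := by linarith
  have hball : ∀ z ∈ ball z₀ (r - ‖z₀‖), ‖z‖ < r := by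
    intro z hzz
    have h1 : ‖z - z₀‖ < r - ‖z₀‖ := mem_ball_iff_norm.1 hzz
    calc ‖z‖ = ‖z - z₀ + z₀‖ := by rw [sub_add_cancel]
    _ ≤ ‖z - z₀‖ + ‖z₀‖ := norm_add_le _ _
    _ < r := by linarith
  have hIoc : Set.uIoc (0 : ℝ) 1 = Ioc 0 1 := uIoc_of_le zero_le_one
  have key := intervalIntegral.hasDerivAt_integral_of_dominated_loc_of_deriv_le
    (μ := volume) (𝕜 := ℂ) (a := 0) (b := 1)
    (F := fun z s => ((s ^ (μ - 1) : ℝ) : ℂ) * p ((s : ℂ) * z))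
    (F' := fun z s => ((s ^ μ : ℝ) : ℂ) * deriv p ((s : ℂ) * z))
    (x₀ := z₀) (bound := fun s => C' * s ^ (μ - 1)) (ball_mem_nhds z₀ hε0) ?_ ?_ ?_ ?_ ?_ ?_
  · exact ((key.2.differentiableAt.const_mul ((μ : ℝ) : ℂ))).differentiableWithinAt
  · filter_upwards [ball_mem_nhds z₀ hε0] with z hzz
    rw [hIoc]
    exact (contOn_aux hpc ((hball z hzz).trans hr1) (μ - 1)).aestronglyMeasurable measurableSet_Ioc
  · exact II_main hpc hz₀ hμ (fun w hw => hC w (le_trans hw hz₀r.le))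
  · rw [hIoc]
    exact (contOn_aux hdc hz₀ μ).aestronglyMeasurable measurableSet_Ioc
  · apply Filter.Eventually.of_forall
    intro s hs z hzz
    rw [hIoc] at hs
    have h1 : ‖deriv p ((s : ℂ) * z)‖ ≤ C' :=
      hC' _ (le_trans (norm_coe_smul_le hs.1.le hs.2) (hball z hzz).le)
    have h2 : s ^ μ ≤ s ^ (μ - 1) :=
      Real.rpow_le_rpow_of_exponent_ge hs.1 hs.2 (by linarith)
    rw [norm_mul, Complex.norm_real, Real.norm_eq_abs,
      abs_of_pos (Real.rpow_pos_of_pos hs.1 _), mul_comm]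
    have h3 : (0:ℝ) ≤ s ^ μ := (Real.rpow_pos_of_pos hs.1 _).le
    calc ‖deriv p ((s : ℂ) * z)‖ * s ^ μ ≤ C' * s ^ μ :=
      mul_le_mul_of_nonneg_right h1 h3
    _ ≤ C' * s ^ (μ - 1) := mul_le_mul_of_nonneg_left h2 hC'0
  · exact (intervalIntegral.intervalIntegrable_rpow' (by linarith)).const_mul C'
  · apply Filter.Eventually.of_forall
    intro s hs z hzz
    rw [hIoc] at hs
    have hmem : (s : ℂ) * z ∈ ball (0 : ℂ) 1 :=
      smul_mem_ball ((hball z hzz).trans hr1) hs.1.le hs.2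
    have hpd : HasDerivAt p (deriv p ((s : ℂ) * z)) ((s : ℂ) * z) :=
      (hp.differentiableAt (isOpen_ball.mem_nhds hmem)).hasDerivAt
    have h1 : HasDerivAt (fun w : ℂ => (s : ℂ) * w) ((s : ℂ)) z := by
      simpa using (hasDerivAt_id z).const_mul ((s : ℂ))
    have h3 := (hpd.comp z h1).const_mul (((s : ℝ) ^ (μ - 1) : ℝ) : ℂ)
    have hmul : ((s ^ μ : ℝ) : ℂ) = ((s ^ (μ - 1) : ℝ) : ℂ) * (s : ℂ) := by
      rw [show μ = (μ - 1) + 1 by ring, Real.rpow_add hs.1, Real.rpow_one]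
      push_cast
      ring
    show HasDerivAt (fun x : ℂ => ((s ^ (μ - 1) : ℝ) : ℂ) * p ((s : ℂ) * x))
      (((s ^ μ : ℝ) : ℂ) * deriv p ((s : ℂ) * z)) z
    rw [hmul]
    exact h3.congr_deriv (by ring)

lemma Jop_cara {μ : ℝ} (hμ : 0 < μ) {p : ℂ → ℂ} (hp : IsCara p) : IsCara (Jop μ p) :=
  ⟨Jop_diff hμ hp.1, Jop_apply_zero hμ hp.2.1, fun _ hz => Jop_re_pos hμ hp hz⟩

lemma Jop_congr {F G : ℂ → ℂ} (h : ∀ w ∈ ball (0 : ℂ) 1, F w = G w) {z : ℂ}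
    (hz : z ∈ ball (0 : ℂ) 1) (μ : ℝ) : Jop μ F z = Jop μ G z := by
  rw [mem_ball_zero_iff] at hz
  unfold Jop
  congr 1
  apply intervalIntegral.integral_congr
  intro s hs
  rw [uIcc_of_le zero_le_one] at hs
  simp only
  rw [h _ (smul_mem_ball hz hs.1 hs.2)]

lemma Jop_Jop (μ ν : ℝ) (g : ℂ → ℂ) (z : ℂ) :
    Jop μ (Jop ν g) z =
      ((μ : ℝ) : ℂ) * ((ν : ℝ) : ℂ) * ∫ s in (0:ℝ)..1, ∫ t in (0:ℝ)..1,
        ((s ^ (μ - 1) : ℝ) : ℂ) * ((t ^ (ν - 1) : ℝ) : ℂ) * g ((s : ℂ) * (t : ℂ) * z) := by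
  unfold Jop
  have h1 : ∀ s ∈ uIcc (0:ℝ) 1,
      ((s ^ (μ - 1) : ℝ) : ℂ) *
          (((ν : ℝ) : ℂ) * ∫ t in (0:ℝ)..1, ((t ^ (ν - 1) : ℝ) : ℂ) * g ((t : ℂ) * ((s : ℂ) * z)))
        = ((ν : ℝ) : ℂ) * ∫ t in (0:ℝ)..1,
            ((s ^ (μ - 1) : ℝ) : ℂ) * ((t ^ (ν - 1) : ℝ) : ℂ) * g ((s : ℂ) * (t : ℂ) * z) := by
    intro s _
    rw [mul_left_comm, ← intervalIntegral.integral_const_mul]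
    congr 1
    apply intervalIntegral.integral_congr
    intro t _
    simp only
    rw [show (t : ℂ) * ((s : ℂ) * z) = (s : ℂ) * (t : ℂ) * z by ring]
    ring
  rw [intervalIntegral.integral_congr h1, intervalIntegral.integral_const_mul, mul_assoc]

lemma Jop_swap {μ ν : ℝ} (hμ : 0 < μ) (hν : 0 < ν) {g : ℂ → ℂ}
    (hg : ContinuousOn g (ball 0 1)) {z : ℂ} (hz : z ∈ ball (0 : ℂ) 1) :
    Jop μ (Jop ν g) z = Jop ν (Jop μ g) z := by
  rw [mem_ball_zero_iff] at hz
  obtain ⟨C, hC0, hC⟩ := exists_bound hg hz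
  rw [Jop_Jop, Jop_Jop]
  have hint : Integrable
      (Function.uncurry (fun s t : ℝ =>
        ((s ^ (μ - 1) : ℝ) : ℂ) * ((t ^ (ν - 1) : ℝ) : ℂ) * g ((s : ℂ) * (t : ℂ) * z)))
      ((volume.restrict (Ioc (0:ℝ) 1)).prod (volume.restrict (Ioc (0:ℝ) 1))) := by
    rw [Measure.prod_restrict]
    have h1 : Integrable (fun s : ℝ => C * s ^ (μ - 1)) (volume.restrict (Ioc (0:ℝ) 1)) := by
      have := (intervalIntegral.intervalIntegrable_rpow' (r := μ - 1) (by linarith) (a := 0) (b := 1)).const_mul C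
      rwa [intervalIntegrable_iff_integrableOn_Ioc_of_le zero_le_one] at this
    have h2 : Integrable (fun t : ℝ => t ^ (ν - 1)) (volume.restrict (Ioc (0:ℝ) 1)) := by
      have := intervalIntegral.intervalIntegrable_rpow' (r := ν - 1) (by linarith) (a := 0) (b := 1)
      rwa [intervalIntegrable_iff_integrableOn_Ioc_of_le zero_le_one] at this
    have h12 := h1.mul_prod h2
    rw [Measure.prod_restrict] at h12
    apply Integrable.mono' h12
    · apply ContinuousOn.aestronglyMeasurable ?_ (measurableSet_Ioc.prod measurableSet_Ioc)
      apply ContinuousOn.mul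
      · apply ContinuousOn.mul
        · exact Complex.continuous_ofReal.comp_continuousOn
            (fun q hq => ((Real.continuousAt_rpow_const q.1 _
              (Or.inl (ne_of_gt hq.1.1))).comp continuousAt_fst).continuousWithinAt)
        · exact Complex.continuous_ofReal.comp_continuousOn
            (fun q hq => ((Real.continuousAt_rpow_const q.2 _
              (Or.inl (ne_of_gt hq.2.1))).comp continuousAt_snd).continuousWithinAt)
      · apply hg.comp (((Complex.continuous_ofReal.comp continuous_fst).mul
          (Complex.continuous_ofReal.comp continuous_snd)).mul continuous_const).continuousOn
        rintro ⟨s, t⟩ ⟨hs, ht⟩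
        rw [mem_ball_zero_iff]
        apply lt_of_le_of_lt _ hz
        show ‖(s : ℂ) * (t : ℂ) * z‖ ≤ ‖z‖
        rw [mul_assoc]
        calc ‖(s : ℂ) * ((t : ℂ) * z)‖ ≤ ‖(t : ℂ) * z‖ := norm_coe_smul_le hs.1.le hs.2
        _ ≤ ‖z‖ := norm_coe_smul_le ht.1.le ht.2
    · rw [ae_restrict_iff' (measurableSet_Ioc.prod measurableSet_Ioc)]
      apply Filter.Eventually.of_forall
      rintro ⟨s, t⟩ ⟨hs, ht⟩
      have hw : ‖(s : ℂ) * (t : ℂ) * z‖ ≤ ‖z‖ := by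
        rw [mul_assoc]
        calc ‖(s : ℂ) * ((t : ℂ) * z)‖ ≤ ‖(t : ℂ) * z‖ := norm_coe_smul_le hs.1.le hs.2
        _ ≤ ‖z‖ := norm_coe_smul_le ht.1.le ht.2
      have hgb := hC _ hw
      simp only [Function.uncurry]
      rw [norm_mul, norm_mul, Complex.norm_real, Complex.norm_real,
        Real.norm_eq_abs, Real.norm_eq_abs,
        abs_of_pos (Real.rpow_pos_of_pos hs.1 _), abs_of_pos (Real.rpow_pos_of_pos ht.1 _)]
      have hsp := (Real.rpow_pos_of_pos hs.1 (μ - 1)).le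
      have htp := (Real.rpow_pos_of_pos ht.1 (ν - 1)).le
      calc s ^ (μ - 1) * t ^ (ν - 1) * ‖g ((s : ℂ) * (t : ℂ) * z)‖
          ≤ s ^ (μ - 1) * t ^ (ν - 1) * C := by
            exact mul_le_mul_of_nonneg_left hgb (by positivity)
      _ = C * s ^ (μ - 1) * t ^ (ν - 1) := by ring
  have hswap := MeasureTheory.integral_integral_swap hint
  simp only [intervalIntegral.integral_of_le zero_le_one]
  rw [hswap]
  rw [show ((μ : ℝ) : ℂ) * ((ν : ℝ) : ℂ) = ((ν : ℝ) : ℂ) * ((μ : ℝ) : ℂ) by ring]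
  congr 1
  apply setIntegral_congr_fun measurableSet_Ioc
  intro t _
  apply setIntegral_congr_fun measurableSet_Ioc
  intro s _
  simp only
  rw [show (t : ℂ) * (s : ℂ) * z = (s : ℂ) * (t : ℂ) * z by ring]
  ring

lemma sigmaIter_diff (σ : ℝ) {p : ℂ → ℂ} (hp : DifferentiableOn ℂ p (ball 0 1)) :
    ∀ n : ℕ, (∀ k : ℕ, k < n → 0 < σ - k) →
      DifferentiableOn ℂ (sigmaIter σ n p) (ball 0 1) := by
  intro n
  induction n with
  | zero => intro _; exact hp
  | succ m ih =>
    intro h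
    rw [sigmaIter_succ]
    exact Jop_diff (h m (Nat.lt_succ_self m)) (ih (fun k hk => h k (hk.trans (Nat.lt_succ_self m))))

lemma sigmaIter_comm (σ : ℝ) {p : ℂ → ℂ} (hp : DifferentiableOn ℂ p (ball 0 1))
    {μ : ℝ} (hμ : 0 < μ) :
    ∀ n : ℕ, (∀ k : ℕ, k < n → 0 < σ - k) →
      ∀ z ∈ ball (0 : ℂ) 1, sigmaIter σ n (Jop μ p) z = Jop μ (sigmaIter σ n p) z := by
  intro n
  induction n with
  | zero => intro _ z _; rfl
  | succ m ih =>
    intro h z hz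
    have hm : 0 < σ - m := h m (Nat.lt_succ_self m)
    have hlt : ∀ k : ℕ, k < m → 0 < σ - k := fun k hk => h k (hk.trans (Nat.lt_succ_self m))
    rw [sigmaIter_succ]
    rw [Jop_congr (fun w hw => ih hlt w hw) hz (σ - m)]
    rw [Jop_swap hm hμ (sigmaIter_diff σ hp m hlt).continuousOn hz]
    rw [← sigmaIter_succ]

/-- Inclusion `B_{n+1}^σ(β) ⊂ B_n^σ(β)`. -/
theorem stmt12 (σ : ℝ) (n : ℕ) (hσ : 0 < σ - (n : ℝ))
    (β : ℝ) (hβ0 : 0 ≤ β) (hβ1 : β < 1)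
    (f : ℂ → ℂ) (hf : MemB σ (n + 1) β f) : MemB σ n β f := by
  obtain ⟨p, hp, hfp⟩ := hf
  refine ⟨Jop (σ - (n : ℝ)) p, Jop_cara hσ hp, fun z hz => ?_⟩
  rw [hfp z hz]
  have hlt : ∀ k : ℕ, k < n → 0 < σ - k := by
    intro k hk
    have : (k : ℝ) ≤ (n : ℝ) := Nat.cast_le.2 hk.le
    linarith
  have hcomm := sigmaIter_comm σ hp.1 hσ n hlt z hz
  rw [hcomm, ← sigmaIter_succ]
end
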